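/- For every ordinal-indexed sequence (g_ι)_{ι<α} of canonical term graphs over Σ_⊥, the unravelling of the limit inferior is below the limit inferior of the unravellings in the rigid partial order: U(liminf_{ι→α} g_ι) ≤⊥r liminf_{ι→α} U(g_ι), where both limit inferiors are taken in the complete semilattice of canonical partial term graphs ordered by ≤⊥r. Moreover, if (g_ι)_{ι<α} is a non-empty convergent sequence of total canonical term graphs in the metric space with the rigid distance d†, then (U(g_ι))_{ι<α} also converges and U(lim_{ι→α} g_ι) = lim_{ι→α} U(g_ι). -/

import Mathlib

set_option autoImplicit false

namespace TGR

/-- A signature: a type of symbols, each with a finite arity. -/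
structure Signature where
  Sym : Type
  ar : Sym → ℕ

/-- The signature `Σ_⊥`: `Σ` extended by a fresh nullary symbol `⊥` (here `none`). -/
def Signature.bot (S : Signature) : Signature where
  Sym := Option S.Sym
  ar := fun o => match o with
    | none => 0
    | some f => S.ar f

/-- A rooted graph over a signature `S` with nodes `N`: a labelling, a successor
function respecting arities, and a root node. -/
structure TermGraph (S : Signature) (N : Type) where
  lab : N → S.Sym
  suc : (n : N) → Fin (S.ar (lab n)) → N
  root : N

namespace TermGraph

variable {S : Signature} {N M K : Type}

/-- `g.IsPos π n`: `π` is a position (path of successor indices from the root) of node `n`. -/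
inductive IsPos (g : TermGraph S N) : List ℕ → N → Prop
  | root : IsPos g [] g.root
  | step {π : List ℕ} {n : N} (h : IsPos g π n) (i : Fin (S.ar (g.lab n))) :
      IsPos g (π ++ [(i : ℕ)]) (g.suc n i)

/-- All nodes are reachable from the root. -/
def Reachable (g : TermGraph S N) : Prop :=
  ∀ n : N, ∃ π : List ℕ, g.IsPos π n

/-- The set of positions of `g`. -/
def pos (g : TermGraph S N) : Set (List ℕ) :=
  {π | ∃ n : N, g.IsPos π n}

/-- The set of positions of node `n` in `g`. -/
def nodePos (g : TermGraph S N) (n : N) : Set (List ℕ) :=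
  {π | g.IsPos π n}

/-- `π ∼_g π'`: `π` and `π'` are positions of the same node. -/
def Aliases (g : TermGraph S N) (π π' : List ℕ) : Prop :=
  ∃ n : N, g.IsPos π n ∧ g.IsPos π' n

/-- A position is acyclic if it passes no node twice. -/
def IsAcyclicPos (g : TermGraph S N) (π : List ℕ) : Prop :=
  ∀ (π₁ π₂ : List ℕ) (n : N), π₁ <+: π₂ → π₂ <+: π →
    g.IsPos π₁ n → g.IsPos π₂ n → π₁ = π₂

/-- The set of acyclic positions of node `n` in `g`. -/
def nodePosAcy (g : TermGraph S N) (n : N) : Set (List ℕ) :=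
  {π | g.IsPos π n ∧ g.IsAcyclicPos π}

/-- The set of acyclic positions of `g`. -/
def posAcy (g : TermGraph S N) : Set (List ℕ) :=
  {π | (∃ n : N, g.IsPos π n) ∧ g.IsAcyclicPos π}

/-- The depth of a node: the minimal length of its positions. -/
noncomputable def depth (g : TermGraph S N) (n : N) : ℕ :=
  sInf {k : ℕ | ∃ π : List ℕ, g.IsPos π n ∧ π.length = k}

open Classical in
/-- The (unique) node at a position. -/
noncomputable def nodeAt (g : TermGraph S N) (π : List ℕ) : N :=
  if h : ∃ n : N, g.IsPos π n then h.choose else g.root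

/-- The label `g(π)` at a position. -/
noncomputable def labAt (g : TermGraph S N) (π : List ℕ) : S.Sym :=
  g.lab (g.nodeAt π)

/-- `Δ`-homomorphism: root, labelling and successor conditions, the latter two
suspended on `Δ`-labelled nodes. -/
structure IsDHom (Δ : Set S.Sym) (g : TermGraph S N) (h : TermGraph S M)
    (φ : N → M) : Prop where
  root_eq : φ g.root = h.root
  lab_eq : ∀ n : N, g.lab n ∉ Δ → h.lab (φ n) = g.lab n
  suc_eq : ∀ n : N, g.lab n ∉ Δ → ∀ (i : ℕ) (hi : i < S.ar (g.lab n))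
      (hi' : i < S.ar (h.lab (φ n))),
      φ (g.suc n ⟨i, hi⟩) = h.suc (φ n) ⟨i, hi'⟩

/-- Rigidity: `Pa_g(n) = Pa_h(φ n)` for all non-`Δ`-labelled nodes `n`. -/
def IsRigid (Δ : Set S.Sym) (g : TermGraph S N) (h : TermGraph S M)
    (φ : N → M) : Prop :=
  ∀ n : N, g.lab n ∉ Δ → g.nodePosAcy n = h.nodePosAcy (φ n)

/-- Rigid `Δ`-homomorphism. -/
def IsRigidDHom (Δ : Set S.Sym) (g : TermGraph S N) (h : TermGraph S M)
    (φ : N → M) : Prop :=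
  IsDHom Δ g h φ ∧ IsRigid Δ g h φ

/-- Isomorphism of term graphs: a homomorphism with an inverse homomorphism. -/
def Iso (g : TermGraph S N) (h : TermGraph S M) : Prop :=
  ∃ (φ : N → M) (ψ : M → N), IsDHom ∅ g h φ ∧ IsDHom ∅ h g ψ ∧
    (∀ n : N, ψ (φ n) = n) ∧ (∀ m : M, φ (ψ m) = m)

/-- A partial term graph (over `Σ_⊥`) is total if no node is labelled `⊥`. -/
def Total (g : TermGraph S.bot N) : Prop := ∀ n : N, g.lab n ≠ none

/-- Rigid `⊥`-homomorphism between partial term graphs. -/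
def IsRigidBotHom (g : TermGraph S.bot N) (h : TermGraph S.bot M)
    (φ : N → M) : Prop :=
  IsRigidDHom ({none} : Set (Option S.Sym)) g h φ

/-- The `⊥`-depth of a partial term graph: the minimal depth of a `⊥`-labelled
node, `ω` (`⊤`) if there is none. -/
noncomputable def botDepth (g : TermGraph S.bot N) : ℕ∞ :=
  sInf {d : ℕ∞ | ∃ n : N, g.lab n = none ∧ (g.depth n : ℕ∞) = d}

/-- `m` is an acyclic predecessor of `n`: some acyclic position `π ++ [i]` of `n`
has `π` a position of `m`. -/
def acyPred (g : TermGraph S N) (n : N) : Set N :=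
  {m | ∃ (π : List ℕ) (i : ℕ), (π ++ [i]) ∈ g.nodePosAcy n ∧ g.IsPos π m}

/-- Retained nodes of the truncation at depth `d`: the least set of nodes
containing all nodes of depth `< d` and closed under acyclic predecessors. -/
inductive Retained (g : TermGraph S N) (d : ℕ) : N → Prop
  | shallow {n : N} : g.depth n < d → Retained g d n
  | pred {n m : N} : Retained g d n → m ∈ g.acyPred n → Retained g d m

theorem not_retained_zero {g : TermGraph S N} (n : N) : ¬ g.Retained 0 n := by
  intro h
  induction h with
  | shallow hd => exact Nat.not_lt_zero _ hd
  | pred _ _ ih => exact ih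

/-- Fringe nodes of the truncation at depth `d` (a pair `(n, i)` stands for the
fresh node `n^i`); at depth `0` the fringe is just (a copy of) the root. -/
def IsFringe (g : TermGraph S.bot N) (d : ℕ) (p : N × ℕ) : Prop :=
  if d = 0 then p = (g.root, 0)
  else g.Retained d p.1 ∧ ∃ h : p.2 < S.bot.ar (g.lab p.1),
    (¬ g.Retained d (g.suc p.1 ⟨p.2, h⟩) ∨
      (d - 1 ≤ g.depth p.1 ∧ p.1 ∉ g.acyPred (g.suc p.1 ⟨p.2, h⟩)))

/-- The node set of the rigid truncation: retained nodes plus fringe nodes. -/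
def TNode (g : TermGraph S.bot N) (d : ℕ) : Type :=
  {x : N ⊕ (N × ℕ) // Sum.elim (g.Retained d) (g.IsFringe d) x}

def truncLab (g : TermGraph S.bot N) (d : ℕ) (x : TNode g d) : S.bot.Sym :=
  Sum.elim (fun n => g.lab n) (fun _ => none) x.1

open Classical in
noncomputable def truncSuc (g : TermGraph S.bot N) (d : ℕ) :
    (x : TNode g d) → Fin (S.bot.ar (truncLab g d x)) → TNode g d
  | ⟨Sum.inl n, hn⟩ => fun i =>
      if hf : g.IsFringe d (n, (i : ℕ)) then ⟨Sum.inr (n, (i : ℕ)), hf⟩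
      else
        ⟨Sum.inl (g.suc n ⟨(i : ℕ), i.isLt⟩), by
          show g.Retained d (g.suc n ⟨(i : ℕ), i.isLt⟩)
          rcases Nat.eq_zero_or_pos d with hd | hd
          · subst hd
            exact ((not_retained_zero n) hn).elim
          · by_contra hc
            apply hf
            show g.IsFringe d (n, (i : ℕ))
            unfold IsFringe
            rw [if_neg (Nat.pos_iff_ne_zero.mp hd)]
            exact ⟨hn, i.isLt, Or.inl hc⟩⟩
  | ⟨Sum.inr p, hp⟩ => fun i => absurd i.isLt (Nat.not_lt_zero _)

noncomputable def truncRoot (g : TermGraph S.bot N) (d : ℕ) : TNode g d :=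
  if hd : d = 0 then
    ⟨Sum.inr (g.root, 0), by
      subst hd
      show g.IsFringe 0 (g.root, 0)
      simp [IsFringe]⟩
  else
    ⟨Sum.inl g.root, by
      show g.Retained d g.root
      exact Retained.shallow (lt_of_le_of_lt
        (Nat.sInf_le ⟨[], IsPos.root, rfl⟩) (Nat.pos_of_ne_zero hd))⟩

/-- The rigid truncation `g†d` of a partial term graph at finite depth `d`. -/
noncomputable def trunc (g : TermGraph S.bot N) (d : ℕ) :
    TermGraph S.bot (TNode g d) where
  lab := truncLab g d
  suc := truncSuc g d
  root := truncRoot g d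

end TermGraph

/-- A canonical term graph: a term graph whose nodes are sets of positions,
each node being exactly its set of positions, with all nodes reachable. -/
structure CTG (S : Signature) where
  nodes : Set (Set (List ℕ))
  tg : TermGraph S ↥nodes
  reach : tg.Reachable
  canon : ∀ n : ↥nodes, (n : Set (List ℕ)) = tg.nodePos n

namespace CTG

variable {S : Signature}

def pos (g : CTG S) : Set (List ℕ) := g.tg.pos
def Aliases (g : CTG S) : List ℕ → List ℕ → Prop := g.tg.Aliases
def posAcy (g : CTG S) : Set (List ℕ) := g.tg.posAcy
noncomputable def labAt (g : CTG S) : List ℕ → S.Sym := g.tg.labAt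

/-- A canonical partial term graph is total if it has no `⊥`-labelled node. -/
def Total (g : CTG S.bot) : Prop := g.tg.Total

/-- The rigid partial order `g ≤⊥r h`: there is a rigid `⊥`-homomorphism
from `g` to `h`. -/
def LeR (g h : CTG S.bot) : Prop :=
  ∃ φ, TermGraph.IsRigidBotHom g.tg h.tg φ

noncomputable def botDepth (g : CTG S.bot) : ℕ∞ := g.tg.botDepth

/-- `TruncIso g h d`: the rigid truncations of `g` and `h` at depth `d ≤ ω`
are isomorphic (`g†ω = g`). -/
def TruncIso {N M : Type} (g : TermGraph S.bot N) (h : TermGraph S.bot M)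
    (d : ℕ∞) : Prop :=
  (d = ⊤ → TermGraph.Iso g h) ∧
  ∀ k : ℕ, d = (k : ℕ∞) → TermGraph.Iso (g.trunc k) (h.trunc k)

/-- The rigid similarity `sim†(g,h)`: the maximal `d ≤ ω` such that
`g†d ≅ h†d`. -/
noncomputable def simr (g h : CTG S.bot) : ℕ∞ :=
  sSup {d : ℕ∞ | TruncIso g.tg h.tg d}

open Classical in
/-- The rigid distance `d†(g,h) = 2^{-sim†(g,h)}` (with `2^{-ω} = 0`). -/
noncomputable def rdist (g h : CTG S.bot) : ℝ :=
  if simr g h = ⊤ then 0 else (1 / 2 : ℝ) ^ (simr g h).toNat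

def IsUB (A : Set (CTG S.bot)) (u : CTG S.bot) : Prop := ∀ g ∈ A, LeR g u

def IsLubR (A : Set (CTG S.bot)) (u : CTG S.bot) : Prop :=
  IsUB A u ∧ ∀ v, IsUB A v → LeR u v

def IsLB (A : Set (CTG S.bot)) (l : CTG S.bot) : Prop := ∀ g ∈ A, LeR l g

def IsGlbR (A : Set (CTG S.bot)) (l : CTG S.bot) : Prop :=
  IsLB A l ∧ ∀ m, IsLB A m → LeR m l

/-- A directed set: non-empty and every two elements have an upper bound inside. -/
def DirectedR (A : Set (CTG S.bot)) : Prop :=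
  A.Nonempty ∧ ∀ g ∈ A, ∀ h ∈ A, ∃ u ∈ A, LeR g u ∧ LeR h u

/-- `L` is the limit inferior `⨆_{β<α} ⨅_{β≤ι<α} f ι` of the ordinal-indexed
sequence `(f ι)_{ι<α}` in the rigid partial order. -/
def IsLiminfR (α : Ordinal.{0}) (f : Ordinal.{0} → CTG S.bot) (L : CTG S.bot) : Prop :=
  ∃ inf : Ordinal.{0} → CTG S.bot,
    (∀ β < α, IsGlbR {g | ∃ ι, β ≤ ι ∧ ι < α ∧ g = f ι} (inf β)) ∧
    IsLubR {g | ∃ β < α, g = inf β} L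

/-- Cauchy condition for an ordinal-indexed sequence w.r.t. the rigid distance. -/
def OrdCauchy (α : Ordinal.{0}) (f : Ordinal.{0} → CTG S.bot) : Prop :=
  ∀ ε : ℝ, 0 < ε → ∃ β < α, ∀ ι ι' : Ordinal.{0},
    β < ι → ι < ι' → ι' < α → rdist (f ι) (f ι') < ε

/-- Convergence of an ordinal-indexed sequence to `g` w.r.t. the rigid distance. -/
def OrdTendsto (α : Ordinal.{0}) (f : Ordinal.{0} → CTG S.bot) (g : CTG S.bot) : Prop :=
  ∀ ε : ℝ, 0 < ε → ∃ β < α, ∀ ι : Ordinal.{0}, β < ι → ι < α → rdist (f ι) g < ε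

/-- `u` is the unravelling of `g`: the term tree with the same positions and
labels as `g` and trivial aliasing. -/
def IsUnravelling (g u : CTG S) : Prop :=
  u.pos = g.pos ∧ (∀ π ∈ g.pos, u.labAt π = g.labAt π) ∧
  (∀ π π' : List ℕ, u.Aliases π π' ↔ (π ∈ g.pos ∧ π = π'))

end CTG

/-- A labelled quotient tree over a signature `S`. -/
structure LQT (S : Signature) where
  P : Set (List ℕ)
  nonempty : P.Nonempty
  l : List ℕ → S.Sym
  rel : List ℕ → List ℕ → Prop
  rel_refl : ∀ π ∈ P, rel π π
  rel_symm : ∀ π π' : List ℕ, rel π π' → rel π' π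
  rel_trans : ∀ π π' π'' : List ℕ, rel π π' → rel π' π'' → rel π π''
  rel_mem : ∀ π π' : List ℕ, rel π π' → π ∈ P ∧ π' ∈ P
  reach_mem : ∀ (π : List ℕ) (i : ℕ), π ++ [i] ∈ P → π ∈ P
  reach_ar : ∀ (π : List ℕ) (i : ℕ), π ++ [i] ∈ P → i < S.ar (l π)
  congr_lab : ∀ π π' : List ℕ, rel π π' → l π = l π'
  congr_suc : ∀ (π π' : List ℕ) (i : ℕ), rel π π' → i < S.ar (l π) →
    rel (π ++ [i]) (π' ++ [i])

end TGR

namespace TGR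


-- ===================================================================
-- Auxiliary development
-- ===================================================================

namespace TermGraph

variable {S : Signature} {N M K : Type}

theorem isPos_nil {g : TermGraph S N} {n : N} (h : g.IsPos [] n) : n = g.root := by
  generalize hq : ([] : List ℕ) = q at h
  cases h with
  | root => rfl
  | step h j => simp at hq

theorem isPos_snoc {g : TermGraph S N} {π : List ℕ} {i : ℕ} {m : N}
    (h : g.IsPos (π ++ [i]) m) :
    ∃ n, g.IsPos π n ∧ ∃ hi : i < S.ar (g.lab n), m = g.suc n ⟨i, hi⟩ := by
  generalize hq : π ++ [i] = q at h
  cases h with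
  | root => simp at hq
  | step h j =>
    rename_i π' n
    obtain ⟨h1, h2⟩ := List.append_inj' hq rfl
    subst h1
    have hji : (j : ℕ) = i := by
      have := h2
      simp at this
      omega
    subst hji
    refine ⟨n, h, j.isLt, ?_⟩
    have : (⟨(j : ℕ), j.isLt⟩ : Fin (S.ar (g.lab n))) = j := Fin.ext rfl
    rw [this]

theorem isPos_unique {g : TermGraph S N} {π : List ℕ} {n m : N}
    (h1 : g.IsPos π n) (h2 : g.IsPos π m) : n = m := by
  induction h1 generalizing m with
  | root => exact (isPos_nil h2).symm
  | step h i ih =>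
    rename_i π₀ n₀
    obtain ⟨n', hn', hi', rfl⟩ := isPos_snoc h2
    have he : n₀ = n' := ih hn'
    subst he
    have : (⟨(i : ℕ), hi'⟩ : Fin (S.ar (g.lab n₀))) = i := Fin.ext rfl
    rw [this]

theorem nodeAt_eq {g : TermGraph S N} {π : List ℕ} {n : N} (h : g.IsPos π n) :
    g.nodeAt π = n := by
  have hc : ∃ m, g.IsPos π m := ⟨n, h⟩
  simp only [nodeAt, dif_pos hc]
  exact isPos_unique hc.choose_spec h

theorem labAt_eq {g : TermGraph S N} {π : List ℕ} {n : N} (h : g.IsPos π n) :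
    g.labAt π = g.lab n := by
  rw [labAt, nodeAt_eq h]

theorem pos_prefix {g : TermGraph S N} {π : List ℕ} {i : ℕ}
    (h : π ++ [i] ∈ g.pos) : π ∈ g.pos := by
  obtain ⟨m, hm⟩ := h
  obtain ⟨n, hn, _⟩ := isPos_snoc hm
  exact ⟨n, hn⟩

theorem depth_le {g : TermGraph S N} {π : List ℕ} {n : N} (h : g.IsPos π n) :
    g.depth n ≤ π.length :=
  Nat.sInf_le ⟨π, h, rfl⟩

theorem homPos {Δ : Set S.Sym} {g : TermGraph S N} {h : TermGraph S M} {φ : N → M}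
    (hΔ : ∀ a ∈ Δ, S.ar a = 0) (hφ : IsDHom Δ g h φ) :
    ∀ {π : List ℕ} {n : N}, g.IsPos π n → h.IsPos π (φ n) := by
  intro π n hp
  induction hp with
  | root => rw [hφ.root_eq]; exact .root
  | step hp i ih =>
    rename_i π' n'
    have hlab : g.lab n' ∉ Δ := by
      intro hmem
      have h0 := hΔ _ hmem
      have hlt : (i : ℕ) < 0 := lt_of_lt_of_le i.isLt (le_of_eq h0)
      exact Nat.not_lt_zero _ hlt
    have hi' : (i : ℕ) < S.ar (h.lab (φ n')) := by
      rw [hφ.lab_eq n' hlab]; exact i.isLt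
    have hs := hφ.suc_eq n' hlab (i : ℕ) i.isLt hi'
    have hfin : (⟨(i : ℕ), i.isLt⟩ : Fin (S.ar (g.lab n'))) = i := Fin.ext rfl
    rw [hfin] at hs
    rw [hs]
    exact IsPos.step ih ⟨(i : ℕ), hi'⟩

theorem bot_ar_none (S : Signature) : ∀ a ∈ ({none} : Set (Option S.Sym)), S.bot.ar a = 0 := by
  intro a ha
  rw [Set.mem_singleton_iff] at ha
  subst ha
  rfl

theorem botHomPos {g : TermGraph S.bot N} {h : TermGraph S.bot M} {φ : N → M}
    (hφ : IsRigidBotHom g h φ) :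
    ∀ {π : List ℕ} {n : N}, g.IsPos π n → h.IsPos π (φ n) :=
  homPos (bot_ar_none S) hφ.1

theorem IsRigidBotHom.comp {g : TermGraph S.bot N} {h : TermGraph S.bot M}
    {k : TermGraph S.bot K} {φ : N → M} {ψ : M → K}
    (hφ : IsRigidBotHom g h φ) (hψ : IsRigidBotHom h k ψ) :
    IsRigidBotHom g k (ψ ∘ φ) := by
  have lab_ne : ∀ n : N, g.lab n ∉ ({none} : Set (Option S.Sym)) →
      h.lab (φ n) ∉ ({none} : Set (Option S.Sym)) := by
    intro n hn
    change g.lab n ≠ none at hn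
    change h.lab (φ n) ≠ none
    rw [hφ.1.lab_eq n hn]
    exact hn
  constructor
  · constructor
    · show ψ (φ g.root) = k.root
      rw [hφ.1.root_eq, hψ.1.root_eq]
    · intro n hn
      show k.lab (ψ (φ n)) = g.lab n
      rw [hψ.1.lab_eq _ (lab_ne n hn), hφ.1.lab_eq _ hn]
    · intro n hn i hi hi'
      have hiφ : i < S.bot.ar (h.lab (φ n)) := by
        rw [hφ.1.lab_eq n hn]; exact hi
      show ψ (φ (g.suc n ⟨i, hi⟩)) = k.suc (ψ (φ n)) ⟨i, hi'⟩
      rw [hφ.1.suc_eq n hn i hi hiφ, hψ.1.suc_eq (φ n) (lab_ne n hn) i hiφ hi']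
  · intro n hn
    show g.nodePosAcy n = k.nodePosAcy (ψ (φ n))
    rw [hφ.2 n hn, hψ.2 (φ n) (lab_ne n hn)]

end TermGraph

namespace CTG

variable {S : Signature}

theorem LeR.trans {g h k : CTG S.bot} (h1 : LeR g h) (h2 : LeR h k) : LeR g k := by
  obtain ⟨φ, hφ⟩ := h1
  obtain ⟨ψ, hψ⟩ := h2
  exact ⟨ψ ∘ φ, hφ.comp hψ⟩

end CTG


-- ===================================================================
-- Canonical term graphs from labelled quotient trees
-- ===================================================================

namespace LQT

variable {S : Signature} (Q : LQT S)

/-- `P` is closed under successors, as required for a term graph. -/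
def SucClosed : Prop := ∀ π ∈ Q.P, ∀ i : ℕ, i < S.ar (Q.l π) → π ++ [i] ∈ Q.P

def cls (π : List ℕ) : Set (List ℕ) := {π' | Q.rel π π'}

theorem cls_eq_of_rel {π π' : List ℕ} (h : Q.rel π π') : Q.cls π = Q.cls π' := by
  ext ρ
  constructor
  · intro hr; exact Q.rel_trans _ _ _ (Q.rel_symm _ _ h) hr
  · intro hr; exact Q.rel_trans _ _ _ h hr

theorem nil_mem : [] ∈ Q.P := by
  obtain ⟨π, hπ⟩ := Q.nonempty
  have : ∀ π : List ℕ, π ∈ Q.P → [] ∈ Q.P := by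
    intro π
    induction π using List.reverseRecOn with
    | nil => exact fun h => h
    | append_singleton π i ih => exact fun h => ih (Q.reach_mem π i h)
  exact this _ hπ

def CNodes : Set (Set (List ℕ)) := {A | ∃ π, π ∈ Q.P ∧ A = Q.cls π}

noncomputable def rep (n : ↥Q.CNodes) : List ℕ := n.2.choose

theorem rep_mem (n : ↥Q.CNodes) : Q.rep n ∈ Q.P := n.2.choose_spec.1

theorem cls_rep (n : ↥Q.CNodes) : (n : Set (List ℕ)) = Q.cls (Q.rep n) :=
  n.2.choose_spec.2

theorem rel_rep {n : ↥Q.CNodes} {π : List ℕ} (h : π ∈ (n : Set (List ℕ))) :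
    Q.rel (Q.rep n) π := by
  rw [Q.cls_rep n] at h
  exact h

noncomputable def ctg (hsc : Q.SucClosed) : TermGraph S ↥Q.CNodes where
  lab n := Q.l (Q.rep n)
  suc n i := ⟨Q.cls (Q.rep n ++ [(i : ℕ)]),
    Q.rep n ++ [(i : ℕ)], hsc (Q.rep n) (Q.rep_mem n) i i.isLt, rfl⟩
  root := ⟨Q.cls [], [], Q.nil_mem, rfl⟩

variable (hsc : Q.SucClosed)

theorem ctg_isPos_fwd {π : List ℕ} {A : ↥Q.CNodes} (h : (Q.ctg hsc).IsPos π A) :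
    π ∈ Q.P ∧ (A : Set (List ℕ)) = Q.cls π := by
  induction h with
  | root => exact ⟨Q.nil_mem, rfl⟩
  | step h i ih =>
    rename_i π' B
    obtain ⟨hmem, hcls⟩ := ih
    have hrel : Q.rel (Q.rep B) π' := by
      apply Q.rel_rep
      rw [hcls]
      exact Q.rel_refl π' hmem
    have hrel2 : Q.rel (Q.rep B ++ [(i : ℕ)]) (π' ++ [(i : ℕ)]) :=
      Q.congr_suc _ _ _ hrel i.isLt
    refine ⟨(Q.rel_mem _ _ hrel2).2, ?_⟩
    show Q.cls (Q.rep B ++ [(i : ℕ)]) = Q.cls (π' ++ [(i : ℕ)])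
    exact Q.cls_eq_of_rel hrel2

theorem ctg_isPos_cls : ∀ (π : List ℕ) (hπ : π ∈ Q.P),
    (Q.ctg hsc).IsPos π ⟨Q.cls π, π, hπ, rfl⟩ := by
  intro π
  induction π using List.reverseRecOn with
  | nil =>
    intro hπ
    have : (⟨Q.cls [], [], hπ, rfl⟩ : ↥Q.CNodes) = (Q.ctg hsc).root :=
      Subtype.ext rfl
    rw [this]
    exact .root
  | append_singleton π i ih =>
    intro hπi
    have hπ : π ∈ Q.P := Q.reach_mem π i hπi
    have hi : i < S.ar (Q.l π) := Q.reach_ar π i hπi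
    have hnode := ih hπ
    have hrel : Q.rel (Q.rep (⟨Q.cls π, π, hπ, rfl⟩ : ↥Q.CNodes)) π :=
      Q.rel_rep (Q.rel_refl π hπ)
    have hlab : Q.l (Q.rep (⟨Q.cls π, π, hπ, rfl⟩ : ↥Q.CNodes)) = Q.l π :=
      Q.congr_lab _ _ hrel
    have hi' : i < S.ar ((Q.ctg hsc).lab ⟨Q.cls π, π, hπ, rfl⟩) := by
      show i < S.ar (Q.l (Q.rep _))
      rw [hlab]
      exact hi
    have hstep := TermGraph.IsPos.step hnode ⟨i, hi'⟩
    have hrel2 : Q.rel (Q.rep (⟨Q.cls π, π, hπ, rfl⟩ : ↥Q.CNodes) ++ [i]) (π ++ [i]) :=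
      Q.congr_suc _ _ _ hrel hi'
    have hsuceq : (Q.ctg hsc).suc ⟨Q.cls π, π, hπ, rfl⟩ ⟨i, hi'⟩ =
        ⟨Q.cls (π ++ [i]), π ++ [i], hπi, rfl⟩ := by
      apply Subtype.ext
      show Q.cls (Q.rep (⟨Q.cls π, π, hπ, rfl⟩ : ↥Q.CNodes) ++ [i]) = Q.cls (π ++ [i])
      exact Q.cls_eq_of_rel hrel2
    rw [hsuceq] at hstep
    exact hstep

theorem ctg_isPos_iff {π : List ℕ} {A : ↥Q.CNodes} :
    (Q.ctg hsc).IsPos π A ↔ π ∈ Q.P ∧ (A : Set (List ℕ)) = Q.cls π := by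
  constructor
  · exact Q.ctg_isPos_fwd hsc
  · rintro ⟨hmem, hcls⟩
    have : A = ⟨Q.cls π, π, hmem, rfl⟩ := Subtype.ext hcls
    rw [this]
    exact Q.ctg_isPos_cls hsc π hmem

theorem ctg_lab_of_isPos {π : List ℕ} {A : ↥Q.CNodes} (h : (Q.ctg hsc).IsPos π A) :
    (Q.ctg hsc).lab A = Q.l π := by
  obtain ⟨hmem, hcls⟩ := Q.ctg_isPos_fwd hsc h
  have hrel : Q.rel (Q.rep A) π := by
    apply Q.rel_rep
    rw [hcls]
    exact Q.rel_refl π hmem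
  exact Q.congr_lab _ _ hrel

noncomputable def toCTG : CTG S where
  nodes := Q.CNodes
  tg := Q.ctg hsc
  reach := fun A => ⟨Q.rep A, (Q.ctg_isPos_iff hsc).2 ⟨Q.rep_mem A, Q.cls_rep A⟩⟩
  canon := fun A => by
    ext π
    show π ∈ (A : Set (List ℕ)) ↔ (Q.ctg hsc).IsPos π A
    rw [Q.ctg_isPos_iff hsc]
    constructor
    · intro hπ
      have hrel : Q.rel (Q.rep A) π := Q.rel_rep hπ
      refine ⟨(Q.rel_mem _ _ hrel).2, ?_⟩
      rw [Q.cls_rep A]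
      exact Q.cls_eq_of_rel hrel
    · rintro ⟨hP, hA⟩
      rw [hA]
      exact Q.rel_refl π hP

theorem toCTG_pos : (Q.toCTG hsc).pos = Q.P := by
  ext π
  constructor
  · rintro ⟨A, hA⟩
    exact ((Q.ctg_isPos_iff hsc).1 hA).1
  · intro hπ
    exact ⟨_, Q.ctg_isPos_cls hsc π hπ⟩

theorem toCTG_labAt {π : List ℕ} (hπ : π ∈ Q.P) : (Q.toCTG hsc).labAt π = Q.l π := by
  have h := Q.ctg_isPos_cls hsc π hπ
  show (Q.ctg hsc).labAt π = Q.l π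
  rw [TermGraph.labAt_eq h]
  exact Q.ctg_lab_of_isPos hsc h

theorem toCTG_aliases {π π' : List ℕ} :
    (Q.toCTG hsc).Aliases π π' ↔ Q.rel π π' := by
  constructor
  · rintro ⟨A, h1, h2⟩
    obtain ⟨hm1, hc1⟩ := Q.ctg_isPos_fwd hsc h1
    obtain ⟨hm2, hc2⟩ := Q.ctg_isPos_fwd hsc h2
    have : π' ∈ Q.cls π := by
      rw [← hc1, hc2]
      exact Q.rel_refl π' hm2
    exact this
  · intro hrel
    have hm1 := (Q.rel_mem _ _ hrel).1
    have hm2 := (Q.rel_mem _ _ hrel).2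
    refine ⟨⟨Q.cls π, π, hm1, rfl⟩, Q.ctg_isPos_cls hsc π hm1, ?_⟩
    show (Q.ctg hsc).IsPos π' _
    refine (Q.ctg_isPos_iff hsc).2 ?_
    refine ⟨hm2, ?_⟩
    show Q.cls π = Q.cls π'
    exact Q.cls_eq_of_rel hrel

end LQT


-- ===================================================================
-- Trees (trivial aliasing)
-- ===================================================================

namespace CTG

variable {S : Signature}

theorem labAt_eq {g : CTG S} {π : List ℕ} {n : ↥g.nodes} (h : g.tg.IsPos π n) :
    g.labAt π = g.tg.lab n := TermGraph.labAt_eq h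

/-- Trivial aliasing. -/
def Triv (g : CTG S) : Prop := ∀ π π' : List ℕ, g.Aliases π π' → π = π'

theorem Triv.acyclic {g : CTG S} (hg : g.Triv) (π : List ℕ) : g.tg.IsAcyclicPos π := by
  intro π₁ π₂ n _ _ h1 h2
  exact hg π₁ π₂ ⟨n, h1, h2⟩

theorem Triv.nodePosAcy_eq {g : CTG S} (hg : g.Triv) {π : List ℕ} {n : ↥g.nodes}
    (h : g.tg.IsPos π n) : g.tg.nodePosAcy n = {π} := by
  ext π'
  constructor
  · rintro ⟨h1, _⟩
    exact Set.mem_singleton_iff.2 (hg π π' ⟨n, h, h1⟩).symm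
  · intro h'
    rw [Set.mem_singleton_iff] at h'
    subst h'
    exact ⟨h, hg.acyclic π'⟩

theorem Triv.depth_eq {g : CTG S} (hg : g.Triv) {π : List ℕ} {n : ↥g.nodes}
    (h : g.tg.IsPos π n) : g.tg.depth n = π.length := by
  have hset : {k : ℕ | ∃ π' : List ℕ, g.tg.IsPos π' n ∧ π'.length = k} = {π.length} := by
    ext k
    constructor
    · rintro ⟨π', h', rfl⟩
      have := hg π π' ⟨n, h, h'⟩
      rw [this]
      rfl
    · intro hk
      rw [Set.mem_singleton_iff] at hk
      exact ⟨π, h, hk.symm⟩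
  show sInf _ = π.length
  rw [hset]
  exact csInf_singleton _

noncomputable def posOf (g : CTG S) (n : ↥g.nodes) : List ℕ := (g.reach n).choose

theorem isPos_posOf (g : CTG S) (n : ↥g.nodes) : g.tg.IsPos (g.posOf n) n :=
  (g.reach n).choose_spec

theorem Triv.posOf_eq {g : CTG S} (hg : g.Triv) {π : List ℕ} {n : ↥g.nodes}
    (h : g.tg.IsPos π n) : g.posOf n = π :=
  hg _ _ ⟨n, g.isPos_posOf n, h⟩

/-- Building a rigid ⊥-homomorphism out of a tree. -/
theorem treeHom {T h : CTG S.bot} (hT : T.Triv)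
    (hcond : ∀ π, π ∈ T.pos → T.labAt π ≠ none →
      π ∈ h.pos ∧ h.labAt π = T.labAt π ∧
        h.tg.nodePosAcy (h.tg.nodeAt π) = {π}) :
    LeR T h := by
  refine ⟨fun n => h.tg.nodeAt (T.posOf n), ⟨?_, ?_, ?_⟩, ?_⟩
  · rw [hT.posOf_eq TermGraph.IsPos.root]
    exact TermGraph.nodeAt_eq TermGraph.IsPos.root
  · intro n hn
    change T.tg.lab n ≠ none at hn
    have hpn := T.isPos_posOf n
    have hlab : T.labAt (T.posOf n) = T.tg.lab n := labAt_eq hpn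
    obtain ⟨hpos, hlabeq, _⟩ := hcond _ ⟨n, hpn⟩ (by rw [hlab]; exact hn)
    show h.tg.lab (h.tg.nodeAt (T.posOf n)) = T.tg.lab n
    rw [← hlab, ← hlabeq]
    rfl
  · intro n hn i hi hi'
    change T.tg.lab n ≠ none at hn
    have hpn := T.isPos_posOf n
    have hlab : T.labAt (T.posOf n) = T.tg.lab n := labAt_eq hpn
    obtain ⟨hpos, hlabeq, _⟩ := hcond _ ⟨n, hpn⟩ (by rw [hlab]; exact hn)
    obtain ⟨m, hm⟩ := hpos
    have hmAt : h.tg.nodeAt (T.posOf n) = m := TermGraph.nodeAt_eq hm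
    subst hmAt
    have hsucpos : T.tg.IsPos (T.posOf n ++ [i]) (T.tg.suc n ⟨i, hi⟩) :=
      TermGraph.IsPos.step hpn ⟨i, hi⟩
    have hposOfsuc : T.posOf (T.tg.suc n ⟨i, hi⟩) = T.posOf n ++ [i] :=
      hT.posOf_eq hsucpos
    have hstep : h.tg.IsPos (T.posOf n ++ [i])
        (h.tg.suc (h.tg.nodeAt (T.posOf n)) ⟨i, hi'⟩) :=
      TermGraph.IsPos.step hm ⟨i, hi'⟩
    show h.tg.nodeAt (T.posOf (T.tg.suc n ⟨i, hi⟩)) = _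
    rw [hposOfsuc]
    exact TermGraph.nodeAt_eq hstep
  · intro n hn
    change T.tg.lab n ≠ none at hn
    have hpn := T.isPos_posOf n
    have hlab : T.labAt (T.posOf n) = T.tg.lab n := labAt_eq hpn
    obtain ⟨hpos, hlabeq, hacy⟩ := hcond _ ⟨n, hpn⟩ (by rw [hlab]; exact hn)
    rw [hT.nodePosAcy_eq hpn, hacy]

/-- The labelled quotient tree of the unravelling of `g`. -/
noncomputable def treeLQT (g : CTG S) : LQT S where
  P := g.pos
  nonempty := ⟨[], g.tg.root, .root⟩
  l := g.labAt
  rel := fun π π' => π ∈ g.pos ∧ π = π'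
  rel_refl := fun π h => ⟨h, rfl⟩
  rel_symm := fun π π' h => ⟨h.2 ▸ h.1, h.2.symm⟩
  rel_trans := fun π π' π'' h h' => ⟨h.1, h.2.trans h'.2⟩
  rel_mem := fun π π' h => ⟨h.1, h.2 ▸ h.1⟩
  reach_mem := fun π i h => TermGraph.pos_prefix h
  reach_ar := fun π i h => by
    obtain ⟨m, hm⟩ := h
    obtain ⟨n, hn, hi, _⟩ := TermGraph.isPos_snoc hm
    show i < S.ar (g.tg.labAt π)
    rw [TermGraph.labAt_eq hn]
    exact hi
  congr_lab := fun π π' h => by rw [h.2]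
  congr_suc := fun π π' i h hi => by
    obtain ⟨hp, rfl⟩ := h
    obtain ⟨n, hn⟩ := hp
    have hi' : i < S.ar (g.tg.lab n) := by
      rw [← TermGraph.labAt_eq hn]
      exact hi
    exact ⟨⟨g.tg.suc n ⟨i, hi'⟩, TermGraph.IsPos.step hn ⟨i, hi'⟩⟩, rfl⟩

theorem treeLQT_sucClosed (g : CTG S) : g.treeLQT.SucClosed := by
  intro π hπ i hi
  obtain ⟨n, hn⟩ := hπ
  have hi' : i < S.ar (g.tg.lab n) := by
    rw [← TermGraph.labAt_eq hn]
    exact hi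
  exact ⟨g.tg.suc n ⟨i, hi'⟩, TermGraph.IsPos.step hn ⟨i, hi'⟩⟩

/-- The unravelling of `g`, concretely. -/
noncomputable def tree (g : CTG S) : CTG S := g.treeLQT.toCTG g.treeLQT_sucClosed

theorem tree_pos (g : CTG S) : g.tree.pos = g.pos :=
  LQT.toCTG_pos _ _

theorem tree_labAt (g : CTG S) {π : List ℕ} (h : π ∈ g.pos) :
    g.tree.labAt π = g.labAt π :=
  LQT.toCTG_labAt _ _ h

theorem tree_triv (g : CTG S) : g.tree.Triv := fun π π' h =>
  ((LQT.toCTG_aliases _ _).1 h).2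

theorem triv_of_unravelling {g u : CTG S} (h : IsUnravelling g u) : u.Triv :=
  fun π π' ha => ((h.2.2 π π').1 ha).2

end CTG


-- ===================================================================
-- Directed unions: an upper bound of a directed set
-- ===================================================================

namespace CTG

variable {S : Signature} (F : Set (CTG S.bot))

theorem aliases_mono {g u : CTG S.bot} (h : LeR g u) {π π' : List ℕ}
    (ha : g.Aliases π π') : u.Aliases π π' := by
  obtain ⟨φ, hφ⟩ := h
  obtain ⟨n, h1, h2⟩ := ha
  exact ⟨φ n, TermGraph.botHomPos hφ h1, TermGraph.botHomPos hφ h2⟩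

theorem lab_mono {g u : CTG S.bot} {φ : ↥g.nodes → ↥u.nodes}
    (hφ : TermGraph.IsRigidBotHom g.tg u.tg φ) {n : ↥g.nodes} {a : S.Sym}
    (e : g.tg.lab n = some a) : u.tg.lab (φ n) = some a := by
  rw [hφ.1.lab_eq n (by show g.tg.lab n ≠ none; rw [e]; exact Option.some_ne_none a), e]

def uP : Set (List ℕ) := {π | ∃ g ∈ F, π ∈ g.pos}

def uRel (π π' : List ℕ) : Prop := ∃ g ∈ F, g.Aliases π π'

open Classical in
noncomputable def uL (π : List ℕ) : Option S.Sym :=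
  if h : ∃ a : S.Sym, ∃ g ∈ F, ∃ n : ↥g.nodes, g.tg.IsPos π n ∧ g.tg.lab n = some a
  then some h.choose else none

theorem uL_consistent (hdir : DirectedR F) {g g' : CTG S.bot} (hg : g ∈ F)
    (hg' : g' ∈ F) {π : List ℕ} {n : ↥g.nodes} {n' : ↥g'.nodes} {a b : S.Sym}
    (h1 : g.tg.IsPos π n) (h2 : g'.tg.IsPos π n')
    (e1 : g.tg.lab n = some a) (e2 : g'.tg.lab n' = some b) : a = b := by
  obtain ⟨u, hu, ⟨φ, hφ⟩, ⟨ψ, hψ⟩⟩ := hdir.2 g hg g' hg'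
  have p1 := TermGraph.botHomPos hφ h1
  have p2 := TermGraph.botHomPos hψ h2
  have heq : φ n = ψ n' := TermGraph.isPos_unique p1 p2
  have l1 : u.tg.lab (φ n) = some a := lab_mono hφ e1
  have l2 : u.tg.lab (ψ n') = some b := lab_mono hψ e2
  rw [heq, l2] at l1
  exact (Option.some_injective _ l1.symm)

theorem uL_eq_some (hdir : DirectedR F) {g : CTG S.bot} (hg : g ∈ F) {π : List ℕ}
    {n : ↥g.nodes} {a : S.Sym} (h : g.tg.IsPos π n) (e : g.tg.lab n = some a) :
    uL F π = some a := by
  have hex : ∃ a : S.Sym, ∃ g ∈ F, ∃ n : ↥g.nodes,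
      g.tg.IsPos π n ∧ g.tg.lab n = some a := ⟨a, g, hg, n, h, e⟩
  rw [uL, dif_pos hex]
  congr 1
  obtain ⟨g', hg', n', h', e'⟩ := hex.choose_spec
  exact uL_consistent F hdir hg' hg h' h e' e

theorem uL_some {π : List ℕ} {a : S.Sym} (h : uL F π = some a) :
    ∃ g ∈ F, ∃ n : ↥g.nodes, g.tg.IsPos π n ∧ g.tg.lab n = some a := by
  rw [uL] at h
  split at h
  · rename_i hex
    obtain ⟨g, hg, n, hn, he⟩ := hex.choose_spec
    have heq : hex.choose = a := Option.some_injective _ h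
    rw [heq] at he
    exact ⟨g, hg, n, hn, he⟩
  · exact absurd h (by simp)

theorem uL_transfer (hdir : DirectedR F) :
    ∀ ρ ρ' : List ℕ, uRel F ρ ρ' → ∀ a : S.Sym, uL F ρ = some a → uL F ρ' = some a := by
  rintro ρ ρ' ⟨g0, hg0, ha0⟩ a hsome
  obtain ⟨g1, hg1, n1, hp1, he1⟩ := uL_some F hsome
  obtain ⟨u, hu, h01, ⟨φ, hφ⟩⟩ := hdir.2 g0 hg0 g1 hg1
  obtain ⟨m, hm1, hm2⟩ := aliases_mono h01 ha0
  have hp1u := TermGraph.botHomPos hφ hp1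
  have heq : φ n1 = m := TermGraph.isPos_unique hp1u hm1
  have hlabu : u.tg.lab m = some a := by rw [← heq]; exact lab_mono hφ he1
  exact uL_eq_some F hdir hu hm2 hlabu

noncomputable def unionLQT (hdir : DirectedR F) : LQT S.bot where
  P := uP F
  nonempty := by
    obtain ⟨g, hg⟩ := hdir.1
    exact ⟨[], g, hg, g.tg.root, .root⟩
  l := uL F
  rel := uRel F
  rel_refl := fun π ⟨g, hg, n, hn⟩ => ⟨g, hg, n, hn, hn⟩
  rel_symm := fun π π' ⟨g, hg, n, h1, h2⟩ => ⟨g, hg, n, h2, h1⟩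
  rel_trans := by
    rintro π π' π'' ⟨g, hg, ha⟩ ⟨g', hg', ha'⟩
    obtain ⟨u, hu, hgu, hg'u⟩ := hdir.2 g hg g' hg'
    obtain ⟨m, m1, m2⟩ := aliases_mono hgu ha
    obtain ⟨m', m1', m2'⟩ := aliases_mono hg'u ha'
    have hmm : m = m' := TermGraph.isPos_unique m2 m1'
    exact ⟨u, hu, m, m1, hmm ▸ m2'⟩
  rel_mem := fun π π' ⟨g, hg, n, h1, h2⟩ => ⟨⟨g, hg, n, h1⟩, ⟨g, hg, n, h2⟩⟩
  reach_mem := by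
    rintro π i ⟨g, hg, hp⟩
    exact ⟨g, hg, TermGraph.pos_prefix hp⟩
  reach_ar := by
    rintro π i ⟨g, hg, m, hm⟩
    obtain ⟨n, hn, hi, _⟩ := TermGraph.isPos_snoc hm
    rcases e : g.tg.lab n with _ | a
    · rw [e] at hi
      exact absurd hi (Nat.not_lt_zero i)
    · rw [e] at hi
      have : uL F π = some a := uL_eq_some F hdir hg hn e
      show i < S.bot.ar (uL F π)
      rw [this]
      exact hi
  congr_lab := by
    intro π π' hrel
    have hrel' : uRel F π' π := by
      obtain ⟨g, hg, n, h1, h2⟩ := hrel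
      exact ⟨g, hg, n, h2, h1⟩
    cases e : uL F π with
    | none =>
      cases e' : uL F π' with
      | none => rfl
      | some b =>
        have hc := uL_transfer F hdir π' π hrel' b e'
        rw [e] at hc
        simp at hc
    | some a => exact (uL_transfer F hdir π π' hrel a e).symm
  congr_suc := by
    rintro π π' i ⟨g, hg, ha⟩ hi
    rcases e : uL F π with _ | a
    · rw [e] at hi
      exact absurd hi (Nat.not_lt_zero i)
    · rw [e] at hi
      obtain ⟨g1, hg1, n1, hp1, he1⟩ := uL_some F e
      obtain ⟨u, hu, hgu, ⟨φ, hφ⟩⟩ := hdir.2 g hg g1 hg1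
      obtain ⟨m, hm1, hm2⟩ := aliases_mono hgu ha
      have heq : φ n1 = m := TermGraph.isPos_unique (TermGraph.botHomPos hφ hp1) hm1
      have hlabu : u.tg.lab m = some a := by rw [← heq]; exact lab_mono hφ he1
      have hiu : i < S.bot.ar (u.tg.lab m) := by rw [hlabu]; exact hi
      exact ⟨u, hu, u.tg.suc m ⟨i, hiu⟩,
        TermGraph.IsPos.step hm1 ⟨i, hiu⟩, TermGraph.IsPos.step hm2 ⟨i, hiu⟩⟩

theorem unionLQT_sucClosed (hdir : DirectedR F) : (unionLQT F hdir).SucClosed := by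
  intro π hπ i hi
  rcases e : uL F π with _ | a
  · have hi' : i < S.bot.ar (uL F π) := hi
    rw [e] at hi'
    exact absurd hi' (Nat.not_lt_zero i)
  · have hi' : i < S.bot.ar (uL F π) := hi
    rw [e] at hi'
    obtain ⟨g1, hg1, n1, hp1, he1⟩ := uL_some F e
    have hin : i < S.bot.ar (g1.tg.lab n1) := by rw [he1]; exact hi'
    exact ⟨g1, hg1, g1.tg.suc n1 ⟨i, hin⟩, TermGraph.IsPos.step hp1 ⟨i, hin⟩⟩

noncomputable def unionCTG (hdir : DirectedR F) : CTG S.bot :=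
  (unionLQT F hdir).toCTG (unionLQT_sucClosed F hdir)

theorem union_isUB (hdir : DirectedR F) : IsUB F (unionCTG F hdir) := by
  intro g hg
  set Q := unionLQT F hdir with hQ
  set hsc := unionLQT_sucClosed F hdir
  have hrelR : ∀ (n : ↥g.nodes) (π : List ℕ), g.tg.IsPos π n → Q.rel (g.posOf n) π :=
    fun n π h => ⟨g, hg, n, g.isPos_posOf n, h⟩
  have hmemP : ∀ (n : ↥g.nodes), g.posOf n ∈ Q.P :=
    fun n => ⟨g, hg, n, g.isPos_posOf n⟩
  refine ⟨fun n => ⟨Q.cls (g.posOf n), g.posOf n, hmemP n, rfl⟩, ?_⟩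
  set φ : ↥g.nodes → ↥Q.CNodes :=
    fun n => ⟨Q.cls (g.posOf n), g.posOf n, hmemP n, rfl⟩ with hφdef
  have hkey : ∀ (n : ↥g.nodes) (π : List ℕ), g.tg.IsPos π n →
      (Q.ctg hsc).IsPos π (φ n) := by
    intro n π h
    rw [Q.ctg_isPos_iff hsc]
    refine ⟨(Q.rel_mem _ _ (hrelR n π h)).2, ?_⟩
    show Q.cls (g.posOf n) = Q.cls π
    exact Q.cls_eq_of_rel (hrelR n π h)
  have hrel_node : ∀ ρ ρ' : List ℕ, Q.rel ρ ρ' →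
      ∃ B : ↥Q.CNodes, (Q.ctg hsc).IsPos ρ B ∧ (Q.ctg hsc).IsPos ρ' B := by
    intro ρ ρ' hr
    have hm := Q.rel_mem _ _ hr
    refine ⟨⟨Q.cls ρ, ρ, hm.1, rfl⟩, Q.ctg_isPos_cls hsc ρ hm.1, ?_⟩
    rw [Q.ctg_isPos_iff hsc]
    exact ⟨hm.2, Q.cls_eq_of_rel hr⟩
  have hnode_rel : ∀ (ρ ρ' : List ℕ) (B : ↥Q.CNodes),
      (Q.ctg hsc).IsPos ρ B → (Q.ctg hsc).IsPos ρ' B → Q.rel ρ ρ' := by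
    intro ρ ρ' B h1 h2
    obtain ⟨hm1, hc1⟩ := Q.ctg_isPos_fwd hsc h1
    obtain ⟨hm2, hc2⟩ := Q.ctg_isPos_fwd hsc h2
    have : ρ' ∈ Q.cls ρ := by
      rw [← hc1, hc2]
      exact Q.rel_refl ρ' hm2
    exact this
  have hacy_down : ∀ (u : CTG S.bot), u ∈ F → ∀ π' : List ℕ,
      (Q.ctg hsc).IsAcyclicPos π' → u.tg.IsAcyclicPos π' := by
    intro u hu π' hacy π₁ π₂ mu hpre1 hpre2 q1 q2
    have hr : Q.rel π₁ π₂ := ⟨u, hu, mu, q1, q2⟩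
    obtain ⟨B, b1, b2⟩ := hrel_node _ _ hr
    exact hacy π₁ π₂ B hpre1 hpre2 b1 b2
  constructor
  · constructor
    · show φ g.tg.root = (Q.ctg hsc).root
      exact TermGraph.isPos_unique (hkey g.tg.root [] .root) TermGraph.IsPos.root
    · intro n hn
      change g.tg.lab n ≠ none at hn
      rcases e : g.tg.lab n with _ | a
      · exact absurd e hn
      · have h1 : (Q.ctg hsc).lab (φ n) = Q.l (g.posOf n) :=
          Q.ctg_lab_of_isPos hsc (hkey n _ (g.isPos_posOf n))
        have h2 : uL F (g.posOf n) = some a :=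
          uL_eq_some F hdir hg (g.isPos_posOf n) e
        show (Q.ctg hsc).lab (φ n) = some a
        rw [h1]
        exact h2
    · intro n hn i hi hi'
      have hstep1 : g.tg.IsPos (g.posOf n ++ [i]) (g.tg.suc n ⟨i, hi⟩) :=
        TermGraph.IsPos.step (g.isPos_posOf n) ⟨i, hi⟩
      have hl : (Q.ctg hsc).IsPos (g.posOf n ++ [i]) (φ (g.tg.suc n ⟨i, hi⟩)) :=
        hkey _ _ hstep1
      have hr : (Q.ctg hsc).IsPos (g.posOf n ++ [i])
          ((Q.ctg hsc).suc (φ n) ⟨i, hi'⟩) :=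
        TermGraph.IsPos.step (hkey n _ (g.isPos_posOf n)) ⟨i, hi'⟩
      exact TermGraph.isPos_unique hl hr
  · intro n hn
    change g.tg.lab n ≠ none at hn
    ext π'
    constructor
    · rintro ⟨hpos, hacy⟩
      refine ⟨hkey n π' hpos, ?_⟩
      intro π₁ π₂ B hpre1 hpre2 q1 q2
      have hr : Q.rel π₁ π₂ := hnode_rel π₁ π₂ B q1 q2
      obtain ⟨g', hg', ha'⟩ := hr
      obtain ⟨u, hu, ⟨χ, hχ⟩, hg'u⟩ := hdir.2 g hg g' hg'
      have hπ'u : π' ∈ u.tg.nodePosAcy (χ n) := by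
        rw [← hχ.2 n (by exact hn)]
        exact ⟨hpos, hacy⟩
      obtain ⟨mu, r1, r2⟩ := aliases_mono hg'u ha'
      exact hπ'u.2 π₁ π₂ mu hpre1 hpre2 r1 r2
    · rintro ⟨hposV, hacyV⟩
      have hrr : Q.rel (g.posOf n) π' := by
        have := hnode_rel (g.posOf n) π' (φ n) (hkey n _ (g.isPos_posOf n)) hposV
        exact this
      obtain ⟨g', hg', ha'⟩ := hrr
      obtain ⟨u, hu, ⟨χ, hχ⟩, hg'u⟩ := hdir.2 g hg g' hg'
      have hm : u.tg.IsPos (g.posOf n) (χ n) :=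
        TermGraph.botHomPos hχ (g.isPos_posOf n)
      obtain ⟨mu, r1, r2⟩ := aliases_mono hg'u ha'
      have hmu : mu = χ n := TermGraph.isPos_unique r1 hm
      rw [hmu] at r2
      have hacyu : u.tg.IsAcyclicPos π' := hacy_down u hu π' hacyV
      have hπ'u : π' ∈ u.tg.nodePosAcy (χ n) := ⟨r2, hacyu⟩
      rw [← hχ.2 n (by exact hn)] at hπ'u
      exact hπ'u

end CTG


-- ===================================================================
-- The one-node ⊥ graph, and Part 1
-- ===================================================================

noncomputable def botLQT (S : Signature) : LQT S.bot where
  P := {[]}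
  nonempty := ⟨[], rfl⟩
  l := fun _ => none
  rel := fun π π' => π = [] ∧ π' = []
  rel_refl := fun π h => ⟨h, h⟩
  rel_symm := fun _ _ h => ⟨h.2, h.1⟩
  rel_trans := fun _ _ _ h h' => ⟨h.1, h'.2⟩
  rel_mem := fun _ _ h => ⟨by rw [h.1]; rfl, by rw [h.2]; rfl⟩
  reach_mem := fun π i h => by simp at h
  reach_ar := fun π i h => by simp at h
  congr_lab := fun _ _ _ => rfl
  congr_suc := fun π π' i h hi => absurd hi (Nat.not_lt_zero i)

theorem botLQT_sucClosed (S : Signature) : (botLQT S).SucClosed :=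
  fun π _ i hi => absurd hi (Nat.not_lt_zero i)

theorem part1 {S : Signature} (α : Ordinal.{0}) (f u : Ordinal.{0} → CTG S.bot)
    (L L' Lu : CTG S.bot)
    (hu : ∀ ι < α, CTG.IsUnravelling (f ι) (u ι))
    (hf : CTG.IsLiminfR α f L) (hu' : CTG.IsLiminfR α u L')
    (hL : CTG.IsUnravelling L Lu) : CTG.LeR Lu L' := by
  classical
  obtain ⟨inff, hinff, hlubf⟩ := hf
  obtain ⟨infu, hinfu, hlubu⟩ := hu'
  have hTriv : Lu.Triv := CTG.triv_of_unravelling hL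
  apply CTG.treeHom hTriv
  intro π hπpos hπlab
  have hπL : π ∈ L.pos := by rw [← hL.1]; exact hπpos
  obtain ⟨nL, hnL⟩ := hπL
  have hlabLu : Lu.labAt π = L.labAt π := hL.2.1 π ⟨nL, hnL⟩
  have hlabL : L.labAt π ≠ none := by rw [← hlabLu]; exact hπlab
  rcases e : L.tg.lab nL with _ | a
  · exact absurd (by rw [CTG.labAt_eq hnL]; exact e) hlabL
  have eL : L.labAt π = some a := by rw [CTG.labAt_eq hnL]; exact e
  rcases eq_or_ne α 0 with rfl | hα
  · -- degenerate case: L must be the ⊥-graph, contradiction with `some a`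
    exfalso
    have hUBbot : CTG.IsUB {g | ∃ β < (0 : Ordinal.{0}), g = inff β}
        ((botLQT S).toCTG (botLQT_sucClosed S)) := by
      rintro g ⟨β, hβ, _⟩
      exact absurd hβ (not_lt_of_ge zero_le)
    obtain ⟨ψ, hψ⟩ := hlubf.2 _ hUBbot
    have := hψ.1.lab_eq nL (by show L.tg.lab nL ≠ none; rw [e]; exact Option.some_ne_none a)
    rw [e] at this
    have hnone : ((botLQT S).toCTG (botLQT_sucClosed S)).tg.lab (ψ nL) = none := rfl
    rw [hnone] at this
    cases this
  · have hα0 : (0 : Ordinal.{0}) < α := pos_iff_ne_zero.2 hα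
    set Ff : Set (CTG S.bot) := {g | ∃ β < α, g = inff β} with hFf
    have hmono : ∀ β β', β ≤ β' → β' < α → CTG.LeR (inff β) (inff β') := by
      intro β β' hle hlt
      apply (hinff β' hlt).2
      intro g' hg'
      obtain ⟨ι, h1, h2, rfl⟩ := hg'
      exact (hinff β (lt_of_le_of_lt hle hlt)).1 _ ⟨ι, le_trans hle h1, h2, rfl⟩
    have hdirf : CTG.DirectedR Ff := by
      constructor
      · exact ⟨inff 0, 0, hα0, rfl⟩
      · rintro g ⟨β, hβ, rfl⟩ h ⟨β', hβ', rfl⟩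
        refine ⟨inff (max β β'), ⟨max β β', max_lt hβ hβ', rfl⟩, ?_, ?_⟩
        · exact hmono β (max β β') (le_max_left _ _) (max_lt hβ hβ')
        · exact hmono β' (max β β') (le_max_right _ _) (max_lt hβ hβ')
    obtain ⟨ψ, hψ⟩ := hlubf.2 _ (CTG.union_isUB Ff hdirf)
    have hposV := TermGraph.botHomPos hψ hnL
    have hlabV : (CTG.unionCTG Ff hdirf).tg.lab (ψ nL) = some a := CTG.lab_mono hψ e
    have hlabV' : (CTG.unionCTG Ff hdirf).tg.lab (ψ nL) = CTG.uL Ff π :=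
      (CTG.unionLQT Ff hdirf).ctg_lab_of_isPos (CTG.unionLQT_sucClosed Ff hdirf) hposV
    have huLsome : CTG.uL Ff π = some a := by rw [← hlabV']; exact hlabV
    obtain ⟨g, hgF, m, hm, hlabm⟩ := CTG.uL_some Ff huLsome
    obtain ⟨β, hβ, rfl⟩ := hgF
    -- the tree of `inff β` embeds into every `u ι` for `β ≤ ι < α`
    have hTle : ∀ ι, β ≤ ι → ι < α → CTG.LeR (inff β).tree (u ι) := by
      intro ι h1 h2
      apply CTG.treeHom ((inff β).tree_triv)
      intro ρ hρ hρlab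
      have hρg : ρ ∈ (inff β).pos := by rw [← (inff β).tree_pos]; exact hρ
      obtain ⟨mg, hmg⟩ := hρg
      have htlab : (inff β).tree.labAt ρ = (inff β).labAt ρ :=
        (inff β).tree_labAt ⟨mg, hmg⟩
      rcases eg : (inff β).tg.lab mg with _ | b
      · exfalso
        apply hρlab
        rw [htlab, CTG.labAt_eq hmg, eg]
      obtain ⟨χ, hχ⟩ := (hinff β hβ).1 (f ι) ⟨ι, h1, h2, rfl⟩
      have hposf : (f ι).tg.IsPos ρ (χ mg) := TermGraph.botHomPos hχ hmg
      have hlabf : (f ι).tg.lab (χ mg) = some b := CTG.lab_mono hχ eg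
      have hρf : ρ ∈ (f ι).pos := ⟨χ mg, hposf⟩
      have hρu : ρ ∈ (u ι).pos := by rw [(hu ι h2).1]; exact hρf
      obtain ⟨mu, hmu⟩ := hρu
      refine ⟨⟨mu, hmu⟩, ?_, ?_⟩
      · rw [CTG.labAt_eq hmu] at *
        have h5 : (u ι).labAt ρ = (f ι).labAt ρ := (hu ι h2).2.1 ρ hρf
        rw [CTG.labAt_eq hmu] at h5
        rw [h5, CTG.labAt_eq hposf, hlabf, htlab, CTG.labAt_eq hmg, eg]
      · rw [TermGraph.nodeAt_eq hmu]
        exact (CTG.triv_of_unravelling (hu ι h2)).nodePosAcy_eq hmu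
    have hTinfu : CTG.LeR (inff β).tree (infu β) := by
      apply (hinfu β hβ).2
      rintro g' ⟨ι, h1, h2, rfl⟩
      exact hTle ι h1 h2
    have hinfuL' : CTG.LeR (infu β) L' := hlubu.1 _ ⟨β, hβ, rfl⟩
    obtain ⟨χ₂, hχ₂⟩ := hTinfu.trans hinfuL'
    -- the node of the tree at position π
    have hπT : π ∈ (inff β).tree.pos := by rw [(inff β).tree_pos]; exact ⟨m, hm⟩
    obtain ⟨nT, hnT⟩ := hπT
    have hlabT : (inff β).tree.tg.lab nT = some a := by
      rw [← CTG.labAt_eq hnT, (inff β).tree_labAt ⟨m, hm⟩, CTG.labAt_eq hm, hlabm]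
    have hnT_ne : (inff β).tree.tg.lab nT ∉ ({none} : Set (Option S.Sym)) := by
      show (inff β).tree.tg.lab nT ≠ none
      rw [hlabT]
      exact Option.some_ne_none a
    have hposL' : L'.tg.IsPos π (χ₂ nT) := TermGraph.botHomPos hχ₂ hnT
    refine ⟨⟨χ₂ nT, hposL'⟩, ?_, ?_⟩
    · rw [CTG.labAt_eq hposL', hχ₂.1.lab_eq nT hnT_ne, hlabT, hlabLu, eL]
    · rw [TermGraph.nodeAt_eq hposL', ← hχ₂.2 nT hnT_ne]
      exact ((inff β).tree_triv).nodePosAcy_eq hnT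


-- ===================================================================
-- Truncation analysis
-- ===================================================================

namespace TermGraph

variable {S : Signature} {N : Type} (g : TermGraph S.bot N) (d : ℕ)

theorem truncRoot_val (hd : d ≠ 0) : ((g.trunc d).root).1 = Sum.inl g.root := by
  show (truncRoot g d).1 = _
  rw [truncRoot]
  simp only [hd, ↓reduceDIte]

open Classical in
noncomputable def projT (x : TNode g d) : N :=
  Sum.elim id (fun p => if h : p.2 < S.bot.ar (g.lab p.1) then g.suc p.1 ⟨p.2, h⟩
    else g.root) x.1

theorem projT_inl {n : N} {h} : projT g d ⟨Sum.inl n, h⟩ = n := rfl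

theorem trunc_lab_inl {n : N} {h} :
    (g.trunc d).lab ⟨Sum.inl n, h⟩ = g.lab n := rfl

theorem trunc_lab_inr {p : N × ℕ} {h} :
    (g.trunc d).lab ⟨Sum.inr p, h⟩ = none := rfl

theorem truncSuc_inl_fringe {n : N} {hn}
    (i : Fin (S.bot.ar ((g.trunc d).lab ⟨Sum.inl n, hn⟩)))
    (hf : g.IsFringe d (n, (i : ℕ))) :
    ((g.trunc d).suc ⟨Sum.inl n, hn⟩ i).1 = Sum.inr (n, (i : ℕ)) := by
  show (truncSuc g d ⟨Sum.inl n, hn⟩ i).1 = _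
  simp only [truncSuc]
  simp only [hf, ↓reduceDIte]

theorem truncSuc_inl_notfringe {n : N} {hn}
    (i : Fin (S.bot.ar ((g.trunc d).lab ⟨Sum.inl n, hn⟩)))
    (hf : ¬ g.IsFringe d (n, (i : ℕ))) :
    ((g.trunc d).suc ⟨Sum.inl n, hn⟩ i).1 =
      Sum.inl (g.suc n ⟨(i : ℕ), i.isLt⟩) := by
  show (truncSuc g d ⟨Sum.inl n, hn⟩ i).1 = _
  simp only [truncSuc]
  simp only [hf, ↓reduceDIte]

theorem trunc_isPos_proj (hd : d ≠ 0) {π : List ℕ} {x : TNode g d}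
    (h : (g.trunc d).IsPos π x) : g.IsPos π (projT g d x) := by
  induction h with
  | root =>
    have hval : projT g d (g.trunc d).root = g.root := by
      rw [projT, truncRoot_val g d hd]
      rfl
    rw [hval]
    exact .root
  | step h i ih =>
    rename_i π' x
    rcases x with ⟨x1, hx⟩
    cases x1 with
    | inr p => exact absurd i.isLt (Nat.not_lt_zero _)
    | inl n =>
      rw [projT_inl] at ih
      by_cases hf : g.IsFringe d (n, (i : ℕ))
      · have hval := truncSuc_inl_fringe g d (hn := hx) i hf
        have : projT g d ((g.trunc d).suc ⟨Sum.inl n, hx⟩ i) =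
            g.suc n ⟨(i : ℕ), i.isLt⟩ := by
          rw [projT, hval]
          show (if h : (i : ℕ) < S.bot.ar (g.lab n) then _ else _) = _
          rw [dif_pos (show (i : ℕ) < S.bot.ar (g.lab n) from i.isLt)]
        rw [this]
        exact IsPos.step ih ⟨(i : ℕ), i.isLt⟩
      · have hval := truncSuc_inl_notfringe g d (hn := hx) i hf
        have : projT g d ((g.trunc d).suc ⟨Sum.inl n, hx⟩ i) =
            g.suc n ⟨(i : ℕ), i.isLt⟩ := by
          rw [projT, hval]
          rfl
        rw [this]
        exact IsPos.step ih ⟨(i : ℕ), i.isLt⟩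

theorem trunc_isPos_inr_long (hd : d ≠ 0) {π : List ℕ} {p : N × ℕ} {hp}
    (h : (g.trunc d).IsPos π (⟨Sum.inr p, hp⟩ : TNode g d)) : d ≤ π.length := by
  rcases List.eq_nil_or_concat π with rfl | ⟨π', i, rfl⟩
  · exfalso
    have := isPos_nil h
    have hval := congrArg Subtype.val this
    rw [truncRoot_val g d hd] at hval
    simp at hval
  · rw [List.concat_eq_append] at h ⊢
    obtain ⟨y, hy, hi, hsuc⟩ := isPos_snoc h
    rcases y with ⟨y1, hy1⟩
    cases y1 with
    | inr q => exact absurd hi (Nat.not_lt_zero _)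
    | inl n =>
      by_cases hf : g.IsFringe d (n, i)
      · -- p = (n, i); use the fringe disjunction
        have hfr := hf
        rw [IsFringe, if_neg hd] at hfr
        obtain ⟨hret, har, hor⟩ := hfr
        have hπ'n : g.IsPos π' n := by
          have := trunc_isPos_proj g d hd hy
          rwa [projT_inl] at this
        rcases hor with hnr | ⟨hdep, _⟩
        · -- depth of successor ≥ d
          have hdep : d ≤ g.depth (g.suc n ⟨i, har⟩) := by
            by_contra hc
            exact hnr (Retained.shallow (Nat.lt_of_not_le hc))
          have hpos : g.IsPos (π' ++ [i]) (g.suc n ⟨i, har⟩) := by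
            have := IsPos.step hπ'n ⟨i, har⟩
            exact this
          have hle := depth_le hpos
          simp only [List.length_append, List.length_singleton] at hle ⊢
          omega
        · have hdep' : d - 1 ≤ g.depth n := hdep
          have hle := depth_le hπ'n
          simp only [List.length_append, List.length_singleton] at hle ⊢
          omega
      · -- not fringe: successor is inl, contradiction with inr
        have hval := truncSuc_inl_notfringe g d (hn := hy1)
          ⟨i, hi⟩ (by simpa using hf)
        rw [← hsuc] at hval
        simp at hval

theorem trunc_isPos_short (hd : d ≠ 0) {π : List ℕ} {x : TNode g d}
    (h : (g.trunc d).IsPos π x) (hlen : π.length < d) :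
    ∃ n : N, x.1 = Sum.inl n ∧ g.IsPos π n ∧ (g.trunc d).lab x = g.lab n := by
  rcases x with ⟨x1, hx⟩
  cases x1 with
  | inr p => exact absurd (trunc_isPos_inr_long g d hd h) (by omega)
  | inl n =>
    refine ⟨n, rfl, ?_, rfl⟩
    have := trunc_isPos_proj g d hd h
    rwa [projT_inl] at this

theorem isPos_trunc_of_short (hd : d ≠ 0) {π : List ℕ} {n : N}
    (h : g.IsPos π n) (hlen : π.length < d) :
    ∃ x : TNode g d, x.1 = Sum.inl n ∧ (g.trunc d).IsPos π x := by
  induction h with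
  | root => exact ⟨(g.trunc d).root, truncRoot_val g d hd, .root⟩
  | step h i ih =>
    rename_i π' n'
    have hlen2 : (π' ++ [(i : ℕ)]).length = π'.length + 1 := by simp
    have hlen' : π'.length < d := by omega
    obtain ⟨x, hx1, hxpos⟩ := ih hlen'
    rcases x with ⟨x1, hxr⟩
    simp only at hx1
    subst hx1
    have hnf : ¬ g.IsFringe d (n', (i : ℕ)) := by
      rw [IsFringe, if_neg hd]
      rintro ⟨hret, har, hor⟩
      rcases hor with hnr | ⟨hdep, _⟩
      · apply hnr
        apply Retained.shallow
        show g.depth (g.suc n' ⟨(i : ℕ), har⟩) < d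
        have hle := depth_le (IsPos.step h ⟨(i : ℕ), har⟩)
        simp only [List.length_append, List.length_singleton] at hle
        omega
      · have hle := depth_le h
        have hdep' : d - 1 ≤ g.depth n' := hdep
        omega
    have hi' : (i : ℕ) < S.bot.ar ((g.trunc d).lab ⟨Sum.inl n', hxr⟩) := i.isLt
    refine ⟨(g.trunc d).suc ⟨Sum.inl n', hxr⟩ ⟨(i : ℕ), hi'⟩, ?_, ?_⟩
    · rw [truncSuc_inl_notfringe g d ⟨(i : ℕ), hi'⟩ hnf]
    · exact IsPos.step hxpos ⟨(i : ℕ), hi'⟩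

theorem pos_trunc_of_le (hd : d ≠ 0) {π : List ℕ} {n : N}
    (h : g.IsPos π n) (hlen : π.length ≤ d) : π ∈ (g.trunc d).pos := by
  rcases lt_or_eq_of_le hlen with hlt | heq
  · obtain ⟨x, _, hx⟩ := isPos_trunc_of_short g d hd h hlt
    exact ⟨x, hx⟩
  · rcases List.eq_nil_or_concat π with rfl | ⟨π', i, rfl⟩
    · exact absurd heq.symm (by simpa using hd)
    · rw [List.concat_eq_append] at h heq ⊢
      obtain ⟨n₀, h₀, hi, rfl⟩ := isPos_snoc h
      have hlen' : π'.length < d := by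
        simp only [List.length_append, List.length_singleton] at heq
        omega
      obtain ⟨x, hx1, hxpos⟩ := isPos_trunc_of_short g d hd h₀ hlen'
      rcases x with ⟨x1, hxr⟩
      simp only at hx1
      subst hx1
      have hi' : i < S.bot.ar ((g.trunc d).lab ⟨Sum.inl n₀, hxr⟩) := hi
      exact ⟨_, IsPos.step hxpos ⟨i, hi'⟩⟩

theorem iso_symm {M : Type} {g : TermGraph S N} {h : TermGraph S M} (hiso : Iso g h) :
    Iso h g := by
  obtain ⟨φ, ψ, hφ, hψ, h1, h2⟩ := hiso
  exact ⟨ψ, φ, hψ, hφ, h2, h1⟩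

theorem iso_isPos {S' : Signature} {M : Type} {g : TermGraph S' N} {h : TermGraph S' M}
    (hiso : Iso g h) {π : List ℕ} {n : N} (hp : g.IsPos π n) :
    ∃ m, h.IsPos π m ∧ h.lab m = g.lab n := by
  obtain ⟨φ, ψ, hφ, hψ, _, _⟩ := hiso
  exact ⟨φ n, homPos (fun a ha => absurd ha (Set.notMem_empty a)) hφ hp,
    hφ.lab_eq n (Set.notMem_empty _)⟩

theorem trunc_iso_pos_agree {M : Type} {g : TermGraph S.bot N} {h : TermGraph S.bot M}
    {d : ℕ} (hd : d ≠ 0) (hiso : Iso (g.trunc d) (h.trunc d)) :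
    (∀ π : List ℕ, π.length ≤ d → (π ∈ g.pos ↔ π ∈ h.pos)) ∧
    (∀ (π : List ℕ) (n : N) (m : M), π.length < d → g.IsPos π n → h.IsPos π m →
      g.lab n = h.lab m) := by
  have hsym : Iso (h.trunc d) (g.trunc d) := iso_symm hiso
  constructor
  · intro π hlen
    constructor
    · rintro ⟨n, hn⟩
      obtain ⟨x, hx⟩ := pos_trunc_of_le g d hd hn hlen
      obtain ⟨y, hy, _⟩ := iso_isPos hiso hx
      exact ⟨projT h d y, trunc_isPos_proj h d hd hy⟩
    · rintro ⟨m, hm⟩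
      obtain ⟨y, hy⟩ := pos_trunc_of_le h d hd hm hlen
      obtain ⟨x, hx, _⟩ := iso_isPos hsym hy
      exact ⟨projT g d x, trunc_isPos_proj g d hd hx⟩
  · intro π n m hlen hn hm
    obtain ⟨x, hx1, hxpos⟩ := isPos_trunc_of_short g d hd hn hlen
    have hlabx : (g.trunc d).lab x = g.lab n := by
      rcases x with ⟨x1, hxr⟩
      simp only at hx1
      subst hx1
      rfl
    obtain ⟨y, hy, hlab⟩ := iso_isPos hiso hxpos
    obtain ⟨m', hy1, hm', hlab'⟩ := trunc_isPos_short h d hd hy hlen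
    have hmm : m' = m := isPos_unique hm' hm
    rw [← hmm, ← hlab', hlab, hlabx]

end TermGraph


namespace TermGraph

variable {S : Signature} {N : Type} (g : TermGraph S.bot N) (d : ℕ)

theorem trunc_lab_val {x : TNode g d} {n : N} (hval : x.1 = Sum.inl n) :
    (g.trunc d).lab x = g.lab n := by
  rcases x with ⟨x1, hx⟩
  simp only at hval
  subst hval
  rfl

theorem trunc_lab_val_inr {x : TNode g d} {p : N × ℕ} (hval : x.1 = Sum.inr p) :
    (g.trunc d).lab x = none := by
  rcases x with ⟨x1, hx⟩
  simp only at hval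
  subst hval
  rfl

theorem truncSuc_val_fringe {x : TNode g d} {n : N} (hval : x.1 = Sum.inl n)
    {i : ℕ} (hf : g.IsFringe d (n, i)) (hi' : i < S.bot.ar ((g.trunc d).lab x)) :
    ((g.trunc d).suc x ⟨i, hi'⟩).1 = Sum.inr (n, i) := by
  rcases x with ⟨x1, hx⟩
  simp only at hval
  subst hval
  exact truncSuc_inl_fringe g d ⟨i, hi'⟩ hf

theorem truncSuc_val_notfringe {x : TNode g d} {n : N} (hval : x.1 = Sum.inl n)
    {i : ℕ} (hf : ¬ g.IsFringe d (n, i)) (hi : i < S.bot.ar (g.lab n))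
    (hi' : i < S.bot.ar ((g.trunc d).lab x)) :
    ((g.trunc d).suc x ⟨i, hi'⟩).1 = Sum.inl (g.suc n ⟨i, hi⟩) := by
  rcases x with ⟨x1, hx⟩
  simp only at hval
  subst hval
  rw [truncSuc_inl_notfringe g d ⟨i, hi'⟩ hf]

end TermGraph

-- ===================================================================
-- Truncations of trees
-- ===================================================================

namespace CTG

variable {S : Signature} {T : CTG S.bot}

theorem Triv.retained_iff (hT : T.Triv) {k : ℕ} {n : ↥T.nodes} :
    T.tg.Retained k n ↔ T.tg.depth n < k := by
  constructor
  · intro h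
    induction h with
    | shallow h => exact h
    | pred hr hm ih =>
      rename_i n' m
      obtain ⟨π, i, ⟨hpos', hacy⟩, hπm⟩ := hm
      have hd1 : T.tg.depth n' = π.length + 1 := by
        rw [hT.depth_eq hpos']
        simp
      have hd2 : T.tg.depth m = π.length := hT.depth_eq hπm
      omega
  · exact TermGraph.Retained.shallow

theorem Triv.depth_suc (hT : T.Triv) {π : List ℕ} {n : ↥T.nodes}
    (h : T.tg.IsPos π n) (i : Fin (S.bot.ar (T.tg.lab n))) :
    T.tg.depth (T.tg.suc n i) = T.tg.depth n + 1 := by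
  rw [hT.depth_eq (TermGraph.IsPos.step h i), hT.depth_eq h]
  simp

theorem Triv.mem_acyPred (hT : T.Triv) (n : ↥T.nodes)
    (i : Fin (S.bot.ar (T.tg.lab n))) : n ∈ T.tg.acyPred (T.tg.suc n i) := by
  refine ⟨T.posOf n, (i : ℕ), ⟨?_, hT.acyclic _⟩, T.isPos_posOf n⟩
  exact TermGraph.IsPos.step (T.isPos_posOf n) i

theorem Triv.fringe_iff (hT : T.Triv) {k : ℕ} (hk : k ≠ 0) {n : ↥T.nodes} {i : ℕ} :
    T.tg.IsFringe k (n, i) ↔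
      ∃ _ : i < S.bot.ar (T.tg.lab n), T.tg.depth n + 1 = k := by
  rw [TermGraph.IsFringe, if_neg hk]
  constructor
  · rintro ⟨hret, hi, hor⟩
    refine ⟨hi, ?_⟩
    have hdn : T.tg.depth n < k := hT.retained_iff.1 hret
    rcases hor with hnr | ⟨_, hnp⟩
    · have hnr' : ¬ T.tg.Retained k (T.tg.suc n ⟨i, hi⟩) := hnr
      have h1 : ¬ T.tg.depth (T.tg.suc n ⟨i, hi⟩) < k :=
        fun hc => hnr' (hT.retained_iff.2 hc)
      have h2 : T.tg.depth (T.tg.suc n ⟨i, hi⟩) = T.tg.depth n + 1 :=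
        hT.depth_suc (T.isPos_posOf n) ⟨i, hi⟩
      omega
    · exact absurd (hT.mem_acyPred n ⟨i, hi⟩) hnp
  · rintro ⟨hi, hdep⟩
    refine ⟨?_, hi, Or.inl ?_⟩
    · show T.tg.Retained k n
      exact hT.retained_iff.2 (by omega)
    · show ¬ T.tg.Retained k (T.tg.suc n ⟨i, hi⟩)
      intro hc
      have h2 := hT.retained_iff.1 hc
      rw [hT.depth_suc (T.isPos_posOf n) ⟨i, hi⟩] at h2
      omega

end CTG


namespace CTG

variable {S : Signature}

theorem tree_trunc_hom {T₁ T₂ : CTG S.bot} (h₁ : T₁.Triv) (h₂ : T₂.Triv) {k : ℕ}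
    (hk : k ≠ 0)
    (hpos : ∀ π : List ℕ, π.length < k → π ∈ T₁.pos → π ∈ T₂.pos)
    (hlab : ∀ (π : List ℕ) (n : ↥T₁.nodes) (m : ↥T₂.nodes), π.length < k →
      T₁.tg.IsPos π n → T₂.tg.IsPos π m → T₁.tg.lab n = T₂.tg.lab m) :
    ∃ φ : TermGraph.TNode T₁.tg k → TermGraph.TNode T₂.tg k,
      TermGraph.IsDHom ∅ (T₁.tg.trunc k) (T₂.tg.trunc k) φ ∧
      ∀ x, (φ x).1 = Sum.map (fun n => T₂.tg.nodeAt (T₁.posOf n))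
        (fun p => (T₂.tg.nodeAt (T₁.posOf p.1), p.2)) x.1 := by
  set ν : ↥T₁.nodes → ↥T₂.nodes := fun n => T₂.tg.nodeAt (T₁.posOf n) with hν
  have htrans : ∀ n : ↥T₁.nodes, T₁.tg.depth n < k →
      T₂.tg.IsPos (T₁.posOf n) (ν n) ∧ T₂.tg.depth (ν n) = T₁.tg.depth n ∧
      T₂.tg.lab (ν n) = T₁.tg.lab n := by
    intro n hd
    have hlen : (T₁.posOf n).length < k := by
      rw [← h₁.depth_eq (T₁.isPos_posOf n)]
      exact hd
    obtain ⟨m, hm⟩ := hpos _ hlen ⟨n, T₁.isPos_posOf n⟩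
    have hAt : ν n = m := TermGraph.nodeAt_eq hm
    refine ⟨by rw [hAt]; exact hm, ?_, ?_⟩
    · rw [hAt, h₂.depth_eq hm, h₁.depth_eq (T₁.isPos_posOf n)]
    · rw [hAt]
      exact (hlab _ n m hlen (T₁.isPos_posOf n) hm).symm
  have hfr : ∀ (n : ↥T₁.nodes) (i : ℕ), T₁.tg.depth n < k →
      (T₁.tg.IsFringe k (n, i) ↔ T₂.tg.IsFringe k (ν n, i)) := by
    intro n i hd
    obtain ⟨hp, hdep, hlabeq⟩ := htrans n hd
    rw [h₁.fringe_iff hk, h₂.fringe_iff hk, hlabeq, hdep]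
  have hdep_of_ret : ∀ {n : ↥T₁.nodes}, T₁.tg.Retained k n → T₁.tg.depth n < k :=
    fun h => h₁.retained_iff.1 h
  have hdep_of_fr : ∀ {p : ↥T₁.nodes × ℕ}, T₁.tg.IsFringe k p → T₁.tg.depth p.1 < k := by
    intro p hp
    obtain ⟨hi, hdep⟩ := (h₁.fringe_iff hk).1 (show T₁.tg.IsFringe k (p.1, p.2) from hp)
    omega
  have hprop : ∀ x : TermGraph.TNode T₁.tg k,
      Sum.elim (T₂.tg.Retained k) (T₂.tg.IsFringe k)
        (Sum.map ν (fun p => (ν p.1, p.2)) x.1) := by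
    rintro ⟨x1, hx⟩
    cases x1 with
    | inl n =>
      have hd := hdep_of_ret hx
      exact h₂.retained_iff.2 (by rw [(htrans n hd).2.1]; exact hd)
    | inr p =>
      have hd := hdep_of_fr hx
      show T₂.tg.IsFringe k (ν p.1, p.2)
      exact (hfr p.1 p.2 hd).1 hx
  refine ⟨fun x => ⟨Sum.map ν (fun p => (ν p.1, p.2)) x.1, hprop x⟩,
    ⟨?_, ?_, ?_⟩, fun x => rfl⟩
  · apply Subtype.ext
    show Sum.map ν _ ((T₁.tg.trunc k).root).1 = ((T₂.tg.trunc k).root).1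
    rw [TermGraph.truncRoot_val _ _ hk, TermGraph.truncRoot_val _ _ hk]
    show Sum.inl (ν T₁.tg.root) = _
    have hroot : ν T₁.tg.root = T₂.tg.root := by
      show T₂.tg.nodeAt (T₁.posOf T₁.tg.root) = _
      rw [h₁.posOf_eq TermGraph.IsPos.root]
      exact TermGraph.nodeAt_eq TermGraph.IsPos.root
    rw [hroot]
  · rintro x _
    obtain ⟨x1, hx⟩ := x
    cases x1 with
    | inl n =>
      have hd := hdep_of_ret hx
      show T₂.tg.lab (ν n) = T₁.tg.lab n
      exact (htrans n hd).2.2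
    | inr p => rfl
  · intro x hlabx i hi hi'
    obtain ⟨x1, hx⟩ := x
    cases x1 with
    | inr p =>
      exact absurd hi (Nat.not_lt_zero i)
    | inl n =>
      have hx1 : (⟨Sum.inl n, hx⟩ : TermGraph.TNode T₁.tg k).1 = Sum.inl n := rfl
      have hd := hdep_of_ret hx
      obtain ⟨hp2, hdep2, hlab2⟩ := htrans n hd
      have hiN : i < S.bot.ar (T₁.tg.lab n) := hi
      apply Subtype.ext
      show Sum.map ν (fun p => (ν p.1, p.2))
          (((T₁.tg.trunc k).suc ⟨Sum.inl n, hx⟩ ⟨i, hi⟩).1) =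
        (((T₂.tg.trunc k).suc ⟨Sum.inl (ν n), hprop ⟨Sum.inl n, hx⟩⟩ ⟨i, hi'⟩).1)
      have hval2 : ((⟨Sum.inl (ν n), hprop ⟨Sum.inl n, hx⟩⟩ :
          TermGraph.TNode T₂.tg k)).1 = Sum.inl (ν n) := rfl
      by_cases hf : T₁.tg.IsFringe k (n, i)
      · rw [TermGraph.truncSuc_val_fringe T₁.tg k hx1 hf hi]
        rw [TermGraph.truncSuc_val_fringe T₂.tg k hval2 ((hfr n i hd).1 hf) hi']
        rfl
      · have hiN2 : i < S.bot.ar (T₂.tg.lab (ν n)) := by rw [hlab2]; exact hiN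
        rw [TermGraph.truncSuc_val_notfringe T₁.tg k hx1 hf hiN]
        rw [TermGraph.truncSuc_val_notfringe T₂.tg k hval2
          (fun hc => hf ((hfr n i hd).2 hc)) hiN2 hi']
        show Sum.inl (ν (T₁.tg.suc n ⟨i, hiN⟩)) = _
        have hsucpos : T₂.tg.IsPos (T₁.posOf n ++ [i])
            (T₂.tg.suc (ν n) ⟨i, hiN2⟩) :=
          TermGraph.IsPos.step hp2 ⟨i, hiN2⟩
        have hposOf : T₁.posOf (T₁.tg.suc n ⟨i, hiN⟩) = T₁.posOf n ++ [i] :=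
          h₁.posOf_eq (TermGraph.IsPos.step (T₁.isPos_posOf n) ⟨i, hiN⟩)
        have : ν (T₁.tg.suc n ⟨i, hiN⟩) = T₂.tg.suc (ν n) ⟨i, hiN2⟩ := by
          show T₂.tg.nodeAt _ = _
          rw [hposOf]
          exact TermGraph.nodeAt_eq hsucpos
        rw [this]

end CTG


namespace CTG

variable {S : Signature}

theorem tree_trunc_iso {T₁ T₂ : CTG S.bot} (h₁ : T₁.Triv) (h₂ : T₂.Triv) {k : ℕ}
    (hk : k ≠ 0)
    (hpos : ∀ π : List ℕ, π.length < k → (π ∈ T₁.pos ↔ π ∈ T₂.pos))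
    (hlab : ∀ (π : List ℕ) (n : ↥T₁.nodes) (m : ↥T₂.nodes), π.length < k →
      T₁.tg.IsPos π n → T₂.tg.IsPos π m → T₁.tg.lab n = T₂.tg.lab m) :
    TermGraph.Iso (T₁.tg.trunc k) (T₂.tg.trunc k) := by
  obtain ⟨φ, hφ, hφs⟩ := tree_trunc_hom h₁ h₂ hk (fun π hl hp => (hpos π hl).1 hp) hlab
  obtain ⟨ψ, hψ, hψs⟩ := tree_trunc_hom h₂ h₁ hk (fun π hl hp => (hpos π hl).2 hp)
    (fun π m n hl hm hn => (hlab π n m hl hn hm).symm)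
  have hback : ∀ (n : ↥T₁.nodes), T₁.tg.depth n < k →
      T₁.tg.nodeAt (T₂.posOf (T₂.tg.nodeAt (T₁.posOf n))) = n := by
    intro n hd
    have hlen : (T₁.posOf n).length < k := by
      rw [← h₁.depth_eq (T₁.isPos_posOf n)]
      exact hd
    obtain ⟨m, hm⟩ := (hpos _ hlen).1 ⟨n, T₁.isPos_posOf n⟩
    rw [TermGraph.nodeAt_eq hm, h₂.posOf_eq hm]
    exact TermGraph.nodeAt_eq (T₁.isPos_posOf n)
  have hback2 : ∀ (m : ↥T₂.nodes), T₂.tg.depth m < k →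
      T₂.tg.nodeAt (T₁.posOf (T₁.tg.nodeAt (T₂.posOf m))) = m := by
    intro m hd
    have hlen : (T₂.posOf m).length < k := by
      rw [← h₂.depth_eq (T₂.isPos_posOf m)]
      exact hd
    obtain ⟨n, hn⟩ := (hpos _ hlen).2 ⟨m, T₂.isPos_posOf m⟩
    rw [TermGraph.nodeAt_eq hn, h₁.posOf_eq hn]
    exact TermGraph.nodeAt_eq (T₂.isPos_posOf m)
  refine ⟨φ, ψ, hφ, hψ, ?_, ?_⟩
  · intro x
    apply Subtype.ext
    rw [hψs, hφs]
    obtain ⟨x1, hx⟩ := x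
    cases x1 with
    | inl n =>
      show Sum.inl (T₁.tg.nodeAt (T₂.posOf (T₂.tg.nodeAt (T₁.posOf n)))) = Sum.inl n
      rw [hback n (h₁.retained_iff.1 hx)]
    | inr p =>
      have hd : T₁.tg.depth p.1 < k := by
        obtain ⟨_, hdep⟩ :=
          (h₁.fringe_iff hk).1 (show T₁.tg.IsFringe k (p.1, p.2) from hx)
        omega
      show Sum.inr (T₁.tg.nodeAt (T₂.posOf (T₂.tg.nodeAt (T₁.posOf p.1))), p.2) =
        Sum.inr p
      rw [hback p.1 hd]
  · intro y
    apply Subtype.ext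
    rw [hφs, hψs]
    obtain ⟨y1, hy⟩ := y
    cases y1 with
    | inl m =>
      show Sum.inl (T₂.tg.nodeAt (T₁.posOf (T₁.tg.nodeAt (T₂.posOf m)))) = Sum.inl m
      rw [hback2 m (h₂.retained_iff.1 hy)]
    | inr p =>
      have hd : T₂.tg.depth p.1 < k := by
        obtain ⟨_, hdep⟩ :=
          (h₂.fringe_iff hk).1 (show T₂.tg.IsFringe k (p.1, p.2) from hy)
        omega
      show Sum.inr (T₂.tg.nodeAt (T₁.posOf (T₁.tg.nodeAt (T₂.posOf p.1))), p.2) =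
        Sum.inr p
      rw [hback2 p.1 hd]

theorem exists_truncIso_of_rdist_lt {g h : CTG S.bot} {k : ℕ}
    (hlt : CTG.rdist g h < (1/2 : ℝ)^(k+1)) :
    ∃ d : ℕ∞, CTG.TruncIso g.tg h.tg d ∧ ((k : ℕ∞) + 1) ≤ d := by
  have hk : (k : ℕ∞) < CTG.simr g h := by
    by_cases htop : CTG.simr g h = ⊤
    · rw [htop]
      exact ENat.coe_lt_top k
    · rw [CTG.rdist, if_neg htop] at hlt
      have hpow : k + 1 < (CTG.simr g h).toNat := by
        have h0 : (0:ℝ) < 1/2 := by norm_num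
        have h1 : (1/2:ℝ) < 1 := by norm_num
        exact (pow_lt_pow_iff_right_of_lt_one₀ h0 h1).1 hlt
      rw [← ENat.coe_toNat htop]
      exact_mod_cast Nat.lt_trans (Nat.lt_succ_self k) hpow
  rw [CTG.simr] at hk
  obtain ⟨d, hd, hkd⟩ := lt_sSup_iff.1 hk
  refine ⟨d, hd, ?_⟩
  cases d with
  | top => exact le_top
  | coe m =>
    have hkm : k < m := by exact_mod_cast hkd
    have : ((k + 1 : ℕ) : ℕ∞) ≤ (m : ℕ∞) := by exact_mod_cast hkm
    simpa using this

theorem data_of_truncIso {g h : CTG S.bot} {k : ℕ} {d : ℕ∞}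
    (hd : CTG.TruncIso g.tg h.tg d) (hkd : ((k : ℕ∞) + 1) ≤ d) (hk0 : k ≠ 0) :
    (∀ π : List ℕ, π.length < k → (π ∈ g.pos ↔ π ∈ h.pos)) ∧
    (∀ (π : List ℕ) (n : ↥g.nodes) (m : ↥h.nodes), π.length < k →
      g.tg.IsPos π n → h.tg.IsPos π m → g.tg.lab n = h.tg.lab m) := by
  cases d with
  | top =>
    have hiso := hd.1 rfl
    have hsym := TermGraph.iso_symm hiso
    constructor
    · intro π _
      constructor
      · rintro ⟨n, hn⟩
        obtain ⟨m, hm, _⟩ := TermGraph.iso_isPos hiso hn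
        exact ⟨m, hm⟩
      · rintro ⟨m, hm⟩
        obtain ⟨n, hn, _⟩ := TermGraph.iso_isPos hsym hm
        exact ⟨n, hn⟩
    · intro π n m _ hn hm
      obtain ⟨m', hm', hl⟩ := TermGraph.iso_isPos hiso hn
      rw [TermGraph.isPos_unique hm hm'] at *
      exact hl.symm
  | coe m =>
    have hiso := hd.2 m rfl
    have hm0 : m ≠ 0 := by
      intro h0
      subst h0
      simp at hkd
    have hkm : k ≤ m := by
      have : ((k+1 : ℕ) : ℕ∞) ≤ (m : ℕ∞) := by
        simpa using hkd
      have := Nat.cast_le.1 this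
      omega
    obtain ⟨hpos, hlab⟩ := TermGraph.trunc_iso_pos_agree hm0 hiso
    constructor
    · intro π hlen
      exact hpos π (by omega)
    · intro π n m' hlen hn hm'
      exact hlab π n m' (by omega) hn hm'

end CTG

theorem part2 {S : Signature} (α : Ordinal.{0}) (hα : α ≠ 0)
    (f u : Ordinal.{0} → CTG S.bot) (g gu : CTG S.bot)
    (htot : ∀ ι < α, (f ι).Total)
    (hu : ∀ ι < α, CTG.IsUnravelling (f ι) (u ι)) (hgtot : g.Total)
    (htend : CTG.OrdTendsto α f g) (hgu : CTG.IsUnravelling g gu) :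
    CTG.OrdTendsto α u gu := by
  intro ε hε
  obtain ⟨k, hkε⟩ := exists_pow_lt_of_lt_one hε (by norm_num : (1/2 : ℝ) < 1)
  have hε' : (0:ℝ) < (1/2 : ℝ)^(k+1+1) := by positivity
  obtain ⟨β, hβ, hconv⟩ := htend _ hε'
  refine ⟨β, hβ, ?_⟩
  intro ι hβι hια
  have hrd := hconv ι hβι hια
  obtain ⟨d, hdti, hdge⟩ := CTG.exists_truncIso_of_rdist_lt hrd
  obtain ⟨hpos, hlab⟩ := CTG.data_of_truncIso hdti hdge (Nat.succ_ne_zero k)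
  -- transfer position/label data from (f ι, g) to (u ι, gu)
  have hupos : (u ι).pos = (f ι).pos := (hu ι hια).1
  have hgupos : gu.pos = g.pos := hgu.1
  have htriv_u : (u ι).Triv := CTG.triv_of_unravelling (hu ι hια)
  have htriv_gu : gu.Triv := CTG.triv_of_unravelling hgu
  have hpos' : ∀ π : List ℕ, π.length < k + 1 → (π ∈ (u ι).pos ↔ π ∈ gu.pos) := by
    intro π hlen
    rw [hupos, hgupos]
    exact hpos π hlen
  have hlab' : ∀ (π : List ℕ) (n : ↥(u ι).nodes) (m : ↥gu.nodes),
      π.length < k + 1 → (u ι).tg.IsPos π n → gu.tg.IsPos π m →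
      (u ι).tg.lab n = gu.tg.lab m := by
    intro π n m hlen hn hm
    have hπf : π ∈ (f ι).pos := by rw [← hupos]; exact ⟨n, hn⟩
    have hπg : π ∈ g.pos := (hpos π hlen).1 hπf
    obtain ⟨nf, hnf⟩ := hπf
    obtain ⟨mg, hmg⟩ := hπg
    have e1 : (u ι).labAt π = (f ι).labAt π := (hu ι hια).2.1 π ⟨nf, hnf⟩
    have e2 : gu.labAt π = g.labAt π := hgu.2.1 π ⟨mg, hmg⟩
    rw [← CTG.labAt_eq hn, ← CTG.labAt_eq hm, e1, e2,
      CTG.labAt_eq hnf, CTG.labAt_eq hmg]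
    exact hlab π nf mg hlen hnf hmg
  have hiso := CTG.tree_trunc_iso htriv_u htriv_gu (Nat.succ_ne_zero k) hpos' hlab'
  have hmem : CTG.TruncIso (u ι).tg gu.tg ((k+1 : ℕ) : ℕ∞) := by
    constructor
    · intro hc
      exact absurd hc (ENat.coe_ne_top (k+1))
    · intro m hm
      have : m = k + 1 := (Nat.cast_inj.1 hm).symm
      subst this
      exact hiso
  have hle : ((k+1 : ℕ) : ℕ∞) ≤ CTG.simr (u ι) gu := le_sSup hmem
  rw [CTG.rdist]
  split_ifs with htop
  · exact hε
  · have htn : k + 1 ≤ (CTG.simr (u ι) gu).toNat := by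
      have h1 := ENat.toNat_le_toNat hle htop
      exact le_of_eq_of_le (ENat.toNat_coe (k+1)).symm h1
    calc (1/2 : ℝ) ^ (CTG.simr (u ι) gu).toNat
        ≤ (1/2 : ℝ) ^ (k+1) := by
          apply pow_le_pow_of_le_one (by norm_num) (by norm_num) htn
      _ ≤ (1/2 : ℝ) ^ k := by
          apply pow_le_pow_of_le_one (by norm_num) (by norm_num) (Nat.le_succ k)
      _ < ε := hkε

/-- Unravelling weakly preserves the limit inferior:
`U(liminf g_ι) ≤⊥r liminf U(g_ι)`; and it fully preserves metric limits: if a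
non-empty sequence of total canonical term graphs converges w.r.t. `d†`, then
the sequence of unravellings converges to the unravelling of the limit. -/
theorem unravelling_preserves_limits (S : Signature) :
    (∀ (α : Ordinal.{0}) (f u : Ordinal.{0} → CTG S.bot) (L L' Lu : CTG S.bot),
      (∀ ι < α, CTG.IsUnravelling (f ι) (u ι)) →
      CTG.IsLiminfR α f L → CTG.IsLiminfR α u L' →
      CTG.IsUnravelling L Lu → CTG.LeR Lu L') ∧
    (∀ (α : Ordinal.{0}), α ≠ 0 →
      ∀ (f u : Ordinal.{0} → CTG S.bot) (g gu : CTG S.bot),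
      (∀ ι < α, (f ι).Total) →
      (∀ ι < α, CTG.IsUnravelling (f ι) (u ι)) →
      g.Total → CTG.OrdTendsto α f g →
      CTG.IsUnravelling g gu →
      CTG.OrdTendsto α u gu) := by
  constructor
  · intro α f u L L' Lu h1 h2 h3 h4
    exact part1 α f u L L' Lu h1 h2 h3 h4
  · intro α hα f u g gu h1 h2 h3 h4 h5
    exact part2 α hα f u g gu h1 h2 h3 h4 h5

end TGR
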